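/- arXiv:1603.00522 — 8 statements merged into one kernel-verified Lean document; each statement's English description precedes it below -/
import Mathlib

section
/- Let h : D → ℝ be a separable function h(x) = Σ_e h_e(x(e)) where each h_e is differentiable and strictly convex, and let f be a monotone normalized submodular function. A point x* ∈ B(f) minimizes h over the base polytope B(f) if and only if, letting F₁,...,F_k be the partition of E into level sets of ∇h(x*) with values c₁ < c₂ < ... < c_k, the point x* satisfies x*(F₁ ∪ ... ∪ F_i) = f(F₁ ∪ ... ∪ F_i) for all 1 ≤ i ≤ k. -/
open Finset

section Aux

/-- Tangent line inequality for a differentiable convex function on ℝ. -/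
lemma tangent_le {g : ℝ → ℝ} (hc : ConvexOn ℝ Set.univ g) (hd : Differentiable ℝ g)
    (x y : ℝ) : g x + deriv g x * (y - x) ≤ g y := by
  rcases lt_trichotomy x y with hxy | rfl | hxy
  · have := hc.deriv_le_slope (Set.mem_univ x) (Set.mem_univ y) hxy (hd x)
    rw [slope_def_field] at this
    rw [le_div_iff₀ (by linarith)] at this
    linarith
  · simp
  · have := hc.slope_le_deriv (Set.mem_univ y) (Set.mem_univ x) hxy (hd x)
    rw [slope_def_field] at this
    rw [div_le_iff₀ (by linarith)] at this
    nlinarith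

/-- If g has negative derivative at 0, some small positive t gives g t < g 0. -/
lemma exists_small_lt {g : ℝ → ℝ} {m : ℝ} (hg : HasDerivAt g m 0) (hm : m < 0)
    {ε₀ : ℝ} (hε₀ : 0 < ε₀) : ∃ t : ℝ, 0 < t ∧ t ≤ ε₀ ∧ g t < g 0 := by
  have hslope := hasDerivAt_iff_tendsto_slope.1 hg
  have h1 : ∀ᶠ t in nhdsWithin 0 {(0:ℝ)}ᶜ, slope g 0 t < 0 :=
    hslope.eventually (gt_mem_nhds hm)
  have h2 : ∀ᶠ t in nhdsWithin 0 (Set.Ioi 0), slope g 0 t < 0 :=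
    h1.filter_mono (nhdsWithin_mono 0 (fun t ht => ne_of_gt ht))
  have h3 : ∀ᶠ t in nhdsWithin 0 (Set.Ioi 0), t ≤ ε₀ ∧ 0 < t := by
    filter_upwards [Icc_mem_nhdsGT_of_mem (by constructor <;> linarith :
      (0:ℝ) ∈ Set.Ico 0 ε₀), self_mem_nhdsWithin] with t ht ht2
    exact ⟨ht.2, ht2⟩
  obtain ⟨t, hts, htb⟩ := (h2.and h3).exists
  refine ⟨t, htb.2, htb.1, ?_⟩
  rw [slope_def_field, sub_zero] at hts
  rcases div_neg_iff.1 hts with ⟨a, b⟩ | ⟨a, b⟩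
  · linarith [htb.2]
  · linarith

variable {α : Type*} [Fintype α] [DecidableEq α]
variable {f : Finset α → ℝ} {x : α → ℝ}

/-- A set is tight for x in B(f). -/
def Tight (f : Finset α → ℝ) (x : α → ℝ) (S : Finset α) : Prop := ∑ e ∈ S, x e = f S

lemma tight_union_inter (hsub : ∀ A B : Finset α, f (A ∪ B) + f (A ∩ B) ≤ f A + f B)
    (hfeas : ∀ U : Finset α, ∑ e ∈ U, x e ≤ f U)
    {S T : Finset α} (hS : Tight f x S) (hT : Tight f x T) :
    Tight f x (S ∪ T) ∧ Tight f x (S ∩ T) := by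
  have hsum : ∑ e ∈ S ∪ T, x e + ∑ e ∈ S ∩ T, x e = ∑ e ∈ S, x e + ∑ e ∈ T, x e :=
    Finset.sum_union_inter
  have h1 := hfeas (S ∪ T)
  have h2 := hfeas (S ∩ T)
  have h3 := hsub S T
  constructor <;> (unfold Tight at *; linarith)

/-- Key exchange existence: if A is not tight, there exist e ∈ A and e' ∉ A with
x e' > 0 such that every tight set containing e also contains e'. -/
lemma exists_unblocked (hsub : ∀ A B : Finset α, f (A ∪ B) + f (A ∩ B) ≤ f A + f B)
    (hmono : ∀ ⦃A B : Finset α⦄, A ⊆ B → f A ≤ f B) (hnorm : f ∅ = 0)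
    (hx0 : ∀ e, 0 ≤ x e) (hfeas : ∀ U : Finset α, ∑ e ∈ U, x e ≤ f U)
    (htot : ∑ e, x e = f univ)
    {A : Finset α} (hA : ¬ Tight f x A) :
    ∃ e ∈ A, ∃ e', e' ∉ A ∧ 0 < x e' ∧ ∀ U, Tight f x U → e ∈ U → e' ∈ U := by
  by_contra hcon
  push_neg at hcon
  apply hA
  have hV : ∀ e ∈ A, ∃ V : Finset α, Tight f x V ∧ e ∈ V ∧
      ∀ e', e' ∉ A → 0 < x e' → e' ∉ V := by
    intro e he
    have key : ∀ Q : Finset α, ∃ V : Finset α, Tight f x V ∧ e ∈ V ∧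
        ∀ e' ∈ Q, e' ∉ A → 0 < x e' → e' ∉ V := by
      intro Q
      induction Q using Finset.induction with
      | empty => exact ⟨univ, htot, mem_univ e, by simp⟩
      | insert _ _ hnotmem ih =>
        rename_i a Q
        obtain ⟨V, hVt, heV, hVav⟩ := ih
        by_cases ha : a ∉ A ∧ 0 < x a
        · obtain ⟨U, hUt, heU, haU⟩ := hcon e he a ha.1 ha.2
          refine ⟨V ∩ U, (tight_union_inter hsub hfeas hVt hUt).2, mem_inter.2 ⟨heV, heU⟩, ?_⟩
          intro e' he' h1 h2
          rcases mem_insert.1 he' with rfl | hQ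
          · exact fun hm => haU (mem_inter.1 hm).2
          · exact fun hm => hVav e' hQ h1 h2 (mem_inter.1 hm).1
        · refine ⟨V, hVt, heV, ?_⟩
          intro e' he' h1 h2
          rcases mem_insert.1 he' with rfl | hQ
          · exact absurd ⟨h1, h2⟩ ha
          · exact hVav e' hQ h1 h2
    obtain ⟨V, h1, h2, h3⟩ := key univ
    exact ⟨V, h1, h2, fun e' => h3 e' (mem_univ e')⟩
  classical
  choose! V hVt hVm hVav using hV
  set W : Finset α := A.biUnion (fun e => V e) with hW
  have hWt : Tight f x W := by
    rw [hW]
    have : ∀ S : Finset α, S ⊆ A → Tight f x (S.biUnion (fun e => V e)) := by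
      intro S
      induction S using Finset.induction with
      | empty => intro _; simpa [Tight, hnorm] using rfl
      | insert _ _ hnm ih =>
        rename_i a S
        intro hsub2
        rw [Finset.biUnion_insert]
        have haA : a ∈ A := hsub2 (mem_insert_self a S)
        exact (tight_union_inter hsub hfeas (hVt a haA)
          (ih (fun y hy => hsub2 (mem_insert_of_mem hy)))).1
    exact this A (subset_refl A)
  have hAW : A ⊆ W := fun e he => mem_biUnion.2 ⟨e, he, hVm e he⟩
  have hzero : ∀ a ∈ W, a ∉ A → x a = 0 := by
    intro a haW haA
    by_contra hne
    have hpos : 0 < x a := lt_of_le_of_ne (hx0 a) (Ne.symm hne)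
    obtain ⟨e, heA, haV⟩ := mem_biUnion.1 haW
    exact hVav e heA a haA hpos haV
  have hxWA : ∑ e ∈ W, x e = ∑ e ∈ A, x e := by
    rw [← Finset.sum_subset hAW]
    intro a ha hna
    exact hzero a ha hna
  have : f A ≤ f W := hmono hAW
  have h1 : ∑ e ∈ A, x e ≤ f A := hfeas A
  unfold Tight at *
  linarith [hWt, hxWA]

lemma perturb_mem (hx0 : ∀ e, 0 ≤ x e) (hfeas : ∀ U : Finset α, ∑ e ∈ U, x e ≤ f U)
    (htot : ∑ e, x e = f univ) {e e' : α} (hne : e ≠ e') {ε : ℝ} (hε : 0 < ε)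
    (hεe' : ε ≤ x e') (hslack : ∀ U : Finset α, e ∈ U → e' ∉ U → ∑ a ∈ U, x a + ε ≤ f U) :
    (∀ a, 0 ≤ (fun a => x a + (if a = e then ε else 0) + (if a = e' then -ε else 0)) a) ∧
    (∀ U : Finset α, ∑ a ∈ U, (x a + (if a = e then ε else 0) + (if a = e' then -ε else 0)) ≤ f U) ∧
    (∑ a, (x a + (if a = e then ε else 0) + (if a = e' then -ε else 0)) = f univ) := by
  have hsum : ∀ U : Finset α,
      ∑ a ∈ U, (x a + (if a = e then ε else 0) + (if a = e' then -ε else 0))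
        = ∑ a ∈ U, x a + (if e ∈ U then ε else 0) + (if e' ∈ U then -ε else 0) := by
    intro U
    rw [Finset.sum_add_distrib, Finset.sum_add_distrib, Finset.sum_ite_eq' U e (fun _ => ε),
      Finset.sum_ite_eq' U e' (fun _ => -ε)]
  refine ⟨?_, ?_, ?_⟩
  · intro a
    dsimp only
    by_cases h1 : a = e
    · subst h1
      rw [if_pos rfl, if_neg hne]
      linarith [hx0 a]
    · by_cases h2 : a = e'
      · subst h2; simp [if_neg h1]; linarith
      · simp [h1, h2, hx0 a]
  · intro U
    rw [hsum U]
    by_cases h1 : e ∈ U <;> by_cases h2 : e' ∈ U <;> simp [h1, h2]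
    · linarith [hfeas U]
    · exact hslack U h1 h2
    · linarith [hfeas U]
    · exact hfeas U
  · rw [hsum univ]
    simp [htot]

lemma perturb_sum_h (h : α → ℝ → ℝ) {e e' : α} (hne : e ≠ e') (ε : ℝ) :
    ∑ a, h a ((fun a => x a + (if a = e then ε else 0) + (if a = e' then -ε else 0)) a)
      = ∑ a, h a (x a) - h e (x e) - h e' (x e') + (h e (x e + ε) + h e' (x e' - ε)) := by
  have he'm : e' ∈ (univ : Finset α).erase e := mem_erase.2 ⟨Ne.symm hne, mem_univ e'⟩
  have key : ∀ (g : α → ℝ), ∑ a, g a = g e + g e' + ∑ a ∈ ((univ : Finset α).erase e).erase e', g a := by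
    intro g
    rw [← Finset.add_sum_erase _ g (mem_univ e), ← Finset.add_sum_erase _ g he'm]
    ring
  rw [key (fun a => h a ((fun a => x a + (if a = e then ε else 0) + (if a = e' then -ε else 0)) a)),
    key (fun a => h a (x a))]
  have hrest : ∑ a ∈ ((univ : Finset α).erase e).erase e',
      h a (x a + (if a = e then ε else 0) + (if a = e' then -ε else 0))
      = ∑ a ∈ ((univ : Finset α).erase e).erase e', h a (x a) := by
    apply Finset.sum_congr rfl
    intro a ha
    have h1 : a ≠ e := (mem_erase.1 (mem_erase.1 ha).2).1 |> fun _ => (mem_erase.1 (mem_erase.1 ha).2).1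
    have h2 : a ≠ e' := (mem_erase.1 ha).1
    simp [h1, h2]
  rw [hrest]
  simp [if_neg hne, if_neg (Ne.symm hne)]
  ring

/-- Nonnegativity of the linear term via Abel summation. -/
lemma abel_nonneg {k : ℕ} (c : Fin k → ℝ) (hc : StrictMono c) (D : Fin k → ℝ)
    (htotal : ∑ j, D j = 0)
    (hprefix : ∀ i : Fin k, ∑ j ∈ univ.filter (fun j => j ≤ i), D j ≤ 0) :
    0 ≤ ∑ j, c j * D j := by
  classical
  set C : ℕ → ℝ := fun n => if hn : n < k then c ⟨n, hn⟩ else 0 with hC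
  set DD : ℕ → ℝ := fun n => if hn : n < k then D ⟨n, hn⟩ else 0 with hDD
  have hCc : ∀ i : Fin k, C i = c i := fun i => dif_pos i.isLt
  have hDDD : ∀ i : Fin k, DD i = D i := fun i => dif_pos i.isLt
  have h1 : ∑ j, c j * D j = ∑ n ∈ range k, C n * DD n := by
    rw [← Fin.sum_univ_eq_sum_range (fun n => C n * DD n) k]
    exact Finset.sum_congr rfl (fun i _ => by rw [hCc, hDDD])
  have h2 : ∑ n ∈ range k, DD n = 0 := by
    rw [← Fin.sum_univ_eq_sum_range DD k, ← htotal]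
    exact Finset.sum_congr rfl (fun i _ => hDDD i)
  have h3 : ∀ i ∈ range (k - 1), ∑ n ∈ range (i + 1), DD n ≤ 0 := by
    intro i hi
    have hik : i < k := lt_of_lt_of_le (mem_range.1 hi) (Nat.sub_le k 1)
    have key : ∑ n ∈ range (i + 1), DD n
        = ∑ j ∈ univ.filter (fun j : Fin k => j ≤ ⟨i, hik⟩), D j := by
      rw [Finset.sum_filter]
      have e1 : ∀ a : Fin k, (if a ≤ (⟨i, hik⟩ : Fin k) then D a else 0)
          = (fun n => if n ≤ i then DD n else 0) (a : ℕ) := by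
        intro a
        by_cases hcase : (a : ℕ) ≤ i
        · rw [if_pos (Fin.le_def.2 hcase)]
          simp only [if_pos hcase]
          exact (hDDD a).symm
        · rw [if_neg (fun hle => hcase (Fin.le_def.1 hle))]
          simp only [if_neg hcase]
      rw [Finset.sum_congr rfl (fun a _ => e1 a),
        Fin.sum_univ_eq_sum_range (fun n => if n ≤ i then DD n else 0) k,
        ← Finset.sum_subset (Finset.range_subset_range.2 hik)
          (fun n _ hn => if_neg (fun hle => hn (mem_range.2 (Nat.lt_succ_of_le hle))))]
      exact (Finset.sum_congr rfl (fun n hn =>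
        (if_pos (Nat.lt_succ_iff.1 (mem_range.1 hn))).symm))
    rw [key]; exact hprefix _
  have habel := Finset.sum_range_by_parts C DD k
  simp only [smul_eq_mul] at habel
  rw [h1, habel, h2, mul_zero, zero_sub]
  rw [neg_nonneg]
  apply Finset.sum_nonpos
  intro i hi
  have hik1 : i + 1 < k := by
    have := mem_range.1 hi; omega
  have hik : i < k := by omega
  apply mul_nonpos_of_nonneg_of_nonpos
  · have : c ⟨i, hik⟩ ≤ c ⟨i+1, hik1⟩ := hc.monotone (by simp [Fin.mk_le_mk])
    rw [hC]; simp only [dif_pos hik1, dif_pos hik]; linarith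
  · exact h3 i hi

end Aux

/-- Membership in the base polytope `B(f)` of a polymatroid on ground set `α`. -/
def memBasePoly {α : Type*} [Fintype α] (f : Finset α → ℝ) (x : α → ℝ) : Prop :=
  (∀ e, 0 ≤ x e) ∧ (∀ U : Finset α, ∑ e ∈ U, x e ≤ f U) ∧ (∑ e, x e = f univ)

/-- `x*` minimizes the separable strictly convex differentiable function
`h(x) = ∑ₑ hₑ(xₑ)` over the base polytope `B(f)` iff `x*` is tight on every prefix union
of level sets of the gradient `∇h(x*)` (levels in increasing order). -/
theorem separable_convex_min_iff_prefix_tight {α : Type*} [Fintype α] [DecidableEq α]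
    (f : Finset α → ℝ)
    (hsub : ∀ A B : Finset α, f (A ∪ B) + f (A ∩ B) ≤ f A + f B)
    (hmono : ∀ ⦃A B : Finset α⦄, A ⊆ B → f A ≤ f B)
    (hnorm : f ∅ = 0)
    (h : α → ℝ → ℝ)
    (hdiff : ∀ e, Differentiable ℝ (h e))
    (hconv : ∀ e, StrictConvexOn ℝ Set.univ (h e))
    (xstar : α → ℝ) (hxstar : memBasePoly f xstar)
    (k : ℕ) (c : Fin k → ℝ) (hc : StrictMono c)
    (F : Fin k → Finset α)
    (hpart : ∀ e : α, ∃! i : Fin k, e ∈ F i)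
    (hgrad : ∀ i : Fin k, ∀ e ∈ F i, deriv (h e) (xstar e) = c i) :
    (∀ z : α → ℝ, memBasePoly f z → ∑ e, h e (xstar e) ≤ ∑ e, h e (z e)) ↔
    (∀ i : Fin k,
      ∑ e ∈ (univ.filter (fun j : Fin k => j ≤ i)).biUnion F, xstar e
        = f ((univ.filter (fun j : Fin k => j ≤ i)).biUnion F)) := by
  obtain ⟨hx0, hfeas, htot⟩ := hxstar
  constructor
  · -- minimality ⇒ prefix tight
    intro hmin i
    by_contra hA
    set A : Finset α := (univ.filter (fun j : Fin k => j ≤ i)).biUnion F with hAdef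
    obtain ⟨e, heA, e', he'A, he'pos, hunb⟩ :=
      exists_unblocked hsub hmono hnorm hx0 hfeas htot (hA : ¬ Tight f xstar A)
    have hne : e ≠ e' := fun hEq => he'A (hEq ▸ heA)
    -- gradient comparison
    obtain ⟨j, hjmem, hejF⟩ := mem_biUnion.1 heA
    have hji : j ≤ i := (mem_filter.1 hjmem).2
    obtain ⟨j', hj'F⟩ := (hpart e').exists
    have hij' : i < j' := by
      by_contra hle
      push_neg at hle
      exact he'A (mem_biUnion.2 ⟨j', mem_filter.2 ⟨mem_univ _, hle⟩, hj'F⟩)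
    have hw : deriv (h e) (xstar e) < deriv (h e') (xstar e') := by
      rw [hgrad j e hejF, hgrad j' e' hj'F]
      exact hc (lt_of_le_of_lt hji hij')
    -- slack
    set 𝒰 : Finset (Finset α) := univ.filter (fun U => e ∈ U ∧ e' ∉ U) with h𝒰
    have h𝒰ne : 𝒰.Nonempty := ⟨{e}, mem_filter.2 ⟨mem_univ _,
      mem_singleton_self e, fun hm => hne (mem_singleton.1 hm).symm⟩⟩
    set s : ℝ := 𝒰.inf' h𝒰ne (fun U => f U - ∑ a ∈ U, xstar a) with hs
    have hspos : 0 < s := by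
      rw [hs, Finset.lt_inf'_iff]
      intro U hU
      obtain ⟨-, heU, he'U⟩ := mem_filter.1 hU
      have hnt : ¬ Tight f xstar U := fun ht => he'U (hunb U ht heU)
      have := hfeas U
      have : ∑ a ∈ U, xstar a ≠ f U := hnt
      have := lt_of_le_of_ne (hfeas U) this
      linarith
    have hε₀ : 0 < min (xstar e') s := lt_min he'pos hspos
    -- the one-dimensional function
    set g : ℝ → ℝ := fun t => h e (xstar e + t) + h e' (xstar e' - t) with hgdef
    have hg1 : HasDerivAt (fun t : ℝ => h e (xstar e + t)) (deriv (h e) (xstar e)) 0 := by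
      have hd := ((hdiff e) (xstar e)).hasDerivAt
      have hin : HasDerivAt (fun t : ℝ => xstar e + t) 1 0 := by
        simpa using (hasDerivAt_id (0:ℝ)).const_add (xstar e)
      have hd' : HasDerivAt (h e) (deriv (h e) (xstar e)) ((fun t : ℝ => xstar e + t) 0) := by
        simp only [add_zero]; exact hd
      have := HasDerivAt.comp (0:ℝ) hd' hin
      rw [mul_one] at this; exact this
    have hg2 : HasDerivAt (fun t : ℝ => h e' (xstar e' - t)) (-(deriv (h e') (xstar e'))) 0 := by
      have hd := ((hdiff e') (xstar e')).hasDerivAt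
      have hin : HasDerivAt (fun t : ℝ => xstar e' - t) (-1) 0 := by
        exact (hasDerivAt_id (0:ℝ)).const_sub (xstar e')
      have hd' : HasDerivAt (h e') (deriv (h e') (xstar e')) ((fun t : ℝ => xstar e' - t) 0) := by
        simp only [sub_zero]; exact hd
      have := HasDerivAt.comp (0:ℝ) hd' hin
      rw [mul_neg_one] at this; exact this
    have hg : HasDerivAt g (deriv (h e) (xstar e) - deriv (h e') (xstar e')) 0 := by
      have := hg1.add hg2
      rw [sub_eq_add_neg]; exact this
    obtain ⟨t, ht0, htε, hlt⟩ := exists_small_lt hg (by linarith) hε₀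
    have hte' : t ≤ xstar e' := le_trans htε (min_le_left _ _)
    have hts : t ≤ s := le_trans htε (min_le_right _ _)
    have hslack : ∀ U : Finset α, e ∈ U → e' ∉ U → ∑ a ∈ U, xstar a + t ≤ f U := by
      intro U heU he'U
      have hUm : U ∈ 𝒰 := mem_filter.2 ⟨mem_univ _, heU, he'U⟩
      have := Finset.inf'_le (fun U => f U - ∑ a ∈ U, xstar a) hUm
      rw [← hs] at this
      linarith
    obtain ⟨hz0, hzfeas, hztot⟩ := perturb_mem hx0 hfeas htot hne ht0 hte' hslack
    have hmem : memBasePoly f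
        (fun a => xstar a + (if a = e then t else 0) + (if a = e' then -t else 0)) :=
      ⟨hz0, hzfeas, hztot⟩
    have hle := hmin _ hmem
    rw [perturb_sum_h h hne t] at hle
    have hg0 : g 0 = h e (xstar e) + h e' (xstar e') := by simp [hgdef]
    have hgt : g t = h e (xstar e + t) + h e' (xstar e' - t) := rfl
    rw [hg0, hgt] at hlt
    linarith
  · -- prefix tight ⇒ minimality
    intro htight z hz
    obtain ⟨hz0, hzfeas, hztot⟩ := hz
    set w : α → ℝ := fun e => deriv (h e) (xstar e) with hwdef
    have tangent : ∀ e, h e (xstar e) + w e * (z e - xstar e) ≤ h e (z e) :=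
      fun e => tangent_le (hconv e).convexOn (hdiff e) _ _
    have hsum1 : ∑ e, h e (xstar e) + ∑ e, w e * (z e - xstar e) ≤ ∑ e, h e (z e) := by
      rw [← Finset.sum_add_distrib]
      exact Finset.sum_le_sum (fun e _ => tangent e)
    have hdisj : ∀ t : Finset (Fin k), Set.PairwiseDisjoint (↑t) F := by
      intro t i _ j _ hij
      simp only [Function.onFun]
      rw [Finset.disjoint_left]
      intro a hai haj
      exact hij (((hpart a).unique hai haj))
    have hbi : ∀ (t : Finset (Fin k)) (g : α → ℝ),
        ∑ a ∈ t.biUnion F, g a = ∑ j ∈ t, ∑ a ∈ F j, g a :=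
      fun t g => Finset.sum_biUnion (hdisj t)
    have huniv : (univ : Finset (Fin k)).biUnion F = (univ : Finset α) := by
      apply Finset.Subset.antisymm (Finset.subset_univ _)
      intro a _
      obtain ⟨j, hj⟩ := (hpart a).exists
      exact mem_biUnion.2 ⟨j, mem_univ _, hj⟩
    set d : α → ℝ := fun a => z a - xstar a with hddef
    set D : Fin k → ℝ := fun j => ∑ a ∈ F j, d a with hDdef
    have hlin : ∑ e, w e * d e = ∑ j, c j * D j := by
      rw [← huniv, hbi univ (fun a => w a * d a)]
      apply Finset.sum_congr rfl
      intro j _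
      rw [hDdef, Finset.mul_sum]
      apply Finset.sum_congr rfl
      intro a ha
      rw [hwdef]
      simp only
      rw [hgrad j a ha]
    have htotal : ∑ j, D j = 0 := by
      have : ∑ j, D j = ∑ a, d a := by
        rw [← huniv, hbi univ d]
      rw [this, hddef]
      simp only
      rw [Finset.sum_sub_distrib, hztot, htot, sub_self]
    have hpref : ∀ i : Fin k, ∑ j ∈ univ.filter (fun j => j ≤ i), D j ≤ 0 := by
      intro i
      have heq : ∑ j ∈ univ.filter (fun j => j ≤ i), D j
          = ∑ a ∈ (univ.filter (fun j : Fin k => j ≤ i)).biUnion F, d a :=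
        (hbi _ d).symm
      rw [heq]
      have h1 : ∑ a ∈ (univ.filter (fun j : Fin k => j ≤ i)).biUnion F, d a
          = ∑ a ∈ (univ.filter (fun j : Fin k => j ≤ i)).biUnion F, z a
            - ∑ a ∈ (univ.filter (fun j : Fin k => j ≤ i)).biUnion F, xstar a := by
        rw [hddef]; exact Finset.sum_sub_distrib z xstar
      rw [h1, htight i]
      have := hzfeas ((univ.filter (fun j : Fin k => j ≤ i)).biUnion F)
      linarith
    have habel := abel_nonneg c hc D htotal hpref
    rw [← hlin] at habel
    linarith
end

section
/- Let f be a monotone normalized submodular function on E. For any weight vector w ∈ ℝ^E with level sets F₁,...,F_k (w(e) = c_i on F_i, c₁ < ... < c_k), a point z ∈ B(f) minimizes the linear function w^T z over B(f) if and only if z(F₁ ∪ ... ∪ F_i) = f(F₁ ∪ ... ∪ F_i) for all 1 ≤ i ≤ k. -/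
open Finset

private lemma abel_sum' (a s : ℕ → ℝ) (k : ℕ) :
    ∑ n ∈ range k, a n * (s (n+1) - s n)
      = a k * s k - a 0 * s 0 - ∑ n ∈ range k, (a (n+1) - a n) * s (n+1) := by
  induction k with
  | zero => simp
  | succ k ih =>
      rw [Finset.sum_range_succ, Finset.sum_range_succ, ih]; ring

private lemma tele' {α : Type*} [DecidableEq α] (f : Finset α → ℝ) (hnorm : f ∅ = 0)
    (r : α → ℕ) (hr : Function.Injective r) :
    ∀ U : Finset α,
      ∑ e ∈ U, (f (U.filter (fun e' => r e' ≤ r e))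
        - f ((U.filter (fun e' => r e' ≤ r e)).erase e)) = f U := by
  intro U
  induction U using Finset.strongInduction with
  | _ U ih =>
    rcases U.eq_empty_or_nonempty with rfl | hU
    · simpa using hnorm.symm
    · obtain ⟨m, hmU, hmax⟩ := U.exists_max_image r hU
      have hUm : U.filter (fun e' => r e' ≤ r m) = U :=
        Finset.filter_true_of_mem (fun x hx => hmax x hx)
      have hss : U.erase m ⊂ U := Finset.erase_ssubset hmU
      have hstep : ∀ e ∈ U.erase m,
          U.filter (fun e' => r e' ≤ r e)
            = (U.erase m).filter (fun e' => r e' ≤ r e) := by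
        intro e he
        have heU := Finset.mem_of_mem_erase he
        have hene : e ≠ m := Finset.ne_of_mem_erase he
        ext x
        simp only [mem_filter, mem_erase]
        constructor
        · rintro ⟨hxU, hxe⟩
          refine ⟨⟨?_, hxU⟩, hxe⟩
          rintro rfl
          exact hene (hr (le_antisymm (hmax e heU) hxe))
        · rintro ⟨⟨_, hxU⟩, hxe⟩; exact ⟨hxU, hxe⟩
      have hsum : ∑ e ∈ U.erase m, (f (U.filter (fun e' => r e' ≤ r e))
            - f ((U.filter (fun e' => r e' ≤ r e)).erase e))
          = ∑ e ∈ U.erase m, (f ((U.erase m).filter (fun e' => r e' ≤ r e))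
            - f (((U.erase m).filter (fun e' => r e' ≤ r e)).erase e)) :=
        Finset.sum_congr rfl (fun e he => by rw [hstep e he])
      rw [← Finset.sum_erase_add _ _ hmU, hsum, ih _ hss, hUm]
      ring

private lemma greedy_bound' {α : Type*} [Fintype α] [DecidableEq α]
    (f : Finset α → ℝ)
    (hsub : ∀ A B : Finset α, f (A ∪ B) + f (A ∩ B) ≤ f A + f B)
    (r : α → ℕ) (U : Finset α) (e : α) (he : e ∈ U) :
    f (univ.filter (fun e' => r e' ≤ r e)) - f ((univ.filter (fun e' => r e' ≤ r e)).erase e)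
      ≤ f (U.filter (fun e' => r e' ≤ r e)) - f ((U.filter (fun e' => r e' ≤ r e)).erase e) := by
  have h := hsub ((univ.filter (fun e' => r e' ≤ r e)).erase e) (U.filter (fun e' => r e' ≤ r e))
  have h1 : (univ.filter (fun e' => r e' ≤ r e)).erase e ∪ U.filter (fun e' => r e' ≤ r e)
      = univ.filter (fun e' => r e' ≤ r e) := by
    ext x
    simp only [mem_union, mem_erase, mem_filter, mem_univ, true_and]
    constructor
    · rintro (⟨_, hx⟩ | ⟨_, hx⟩) <;> exact hx
    · intro hx
      by_cases hxe : x = e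
      · subst hxe; exact Or.inr ⟨he, hx⟩
      · exact Or.inl ⟨hxe, hx⟩
  have h2 : (univ.filter (fun e' => r e' ≤ r e)).erase e ∩ U.filter (fun e' => r e' ≤ r e)
      = (U.filter (fun e' => r e' ≤ r e)).erase e := by
    ext x
    simp only [mem_inter, mem_erase, mem_filter, mem_univ, true_and]
    tauto
  rw [h1, h2] at h
  linarith

/-- Edmonds' greedy characterization: `z ∈ B(f)` minimizes the linear
function `wᵀz` over `B(f)` iff `z` is tight on every prefix union of the level sets
of `w` (taken in increasing order of the weight values). -/
theorem linear_min_iff_prefix_tight {α : Type*} [Fintype α] [DecidableEq α]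
    (f : Finset α → ℝ)
    (hsub : ∀ A B : Finset α, f (A ∪ B) + f (A ∩ B) ≤ f A + f B)
    (hmono : ∀ ⦃A B : Finset α⦄, A ⊆ B → f A ≤ f B)
    (hnorm : f ∅ = 0)
    (w : α → ℝ)
    (k : ℕ) (c : Fin k → ℝ) (hc : StrictMono c)
    (F : Fin k → Finset α)
    (hpart : ∀ e : α, ∃! i : Fin k, e ∈ F i)
    (hlev : ∀ i : Fin k, ∀ e ∈ F i, w e = c i)
    (z : α → ℝ) (hz : memBasePoly f z) :
    (∀ z' : α → ℝ, memBasePoly f z' → ∑ e, w e * z e ≤ ∑ e, w e * z' e) ↔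
    (∀ i : Fin k,
      ∑ e ∈ (univ.filter (fun j : Fin k => j ≤ i)).biUnion F, z e
        = f ((univ.filter (fun j : Fin k => j ≤ i)).biUnion F)) := by
  classical
  have hpart' : ∀ e, ∃ i, e ∈ F i ∧ ∀ j, e ∈ F j → j = i := hpart
  choose idx hidx huniq using hpart'
  set N := Fintype.card α with hN
  set enum := Fintype.equivFin α with henum
  set r : α → ℕ := fun e => (idx e).val * N + (enum e).val with hr
  have henum_lt : ∀ e, (enum e).val < N := fun e => (enum e).isLt
  have hrle : ∀ e e', r e ≤ r e' → (idx e).val ≤ (idx e').val := by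
    intro e e' h
    by_contra hlt
    push_neg at hlt
    have h1 : ((idx e').val + 1) * N ≤ (idx e).val * N :=
      Nat.mul_le_mul_right N hlt
    have h2 : ((idx e').val + 1) * N = (idx e').val * N + N := Nat.succ_mul _ _
    have h3 := henum_lt e'
    simp only [hr] at h
    linarith
  have hrinj : Function.Injective r := by
    intro e e' h
    have h1 := hrle e e' h.le
    have h2 := hrle e' e h.ge
    have hidxeq : idx e = idx e' := Fin.ext (le_antisymm h1 h2)
    have h' : (idx e').val * N + (enum e).val = (idx e').val * N + (enum e').val := by
      simpa only [hr, hidxeq] using h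
    exact enum.injective (Fin.ext (Nat.add_left_cancel h'))
  set g : α → ℝ := fun e => f (univ.filter (fun e' => r e' ≤ r e))
      - f ((univ.filter (fun e' => r e' ≤ r e)).erase e) with hg
  set Q : ℕ → Finset α := fun n => (univ.filter (fun j : Fin k => (j : ℕ) < n)).biUnion F with hQdef
  have hmemQ : ∀ (e : α) (n : ℕ), e ∈ Q n ↔ (idx e).val < n := by
    intro e n
    simp only [hQdef, mem_biUnion, mem_filter, mem_univ, true_and]
    constructor
    · rintro ⟨j, hj, hje⟩
      rw [huniq e j hje] at hj
      exact hj
    · intro h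
      exact ⟨idx e, h, hidx e⟩
  have hQ0 : Q 0 = ∅ := by
    ext e; simp [hmemQ]
  have hQk : ∀ n, k ≤ n → Q n = univ := by
    intro n hn
    ext e
    simp only [mem_univ, iff_true, hmemQ]
    exact lt_of_lt_of_le (idx e).isLt hn
  have hQfilter : ∀ n, ∀ e ∈ Q n,
      univ.filter (fun e' => r e' ≤ r e) = (Q n).filter (fun e' => r e' ≤ r e) := by
    intro n e he
    ext x
    simp only [mem_filter, mem_univ, true_and]
    refine ⟨fun hx => ⟨?_, hx⟩, fun hx => hx.2⟩
    rw [hmemQ] at he ⊢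
    exact lt_of_le_of_lt (hrle x e hx) he
  have hgQ : ∀ n, ∑ e ∈ Q n, g e = f (Q n) := by
    intro n
    have : ∑ e ∈ Q n, g e = ∑ e ∈ Q n, (f ((Q n).filter (fun e' => r e' ≤ r e))
        - f (((Q n).filter (fun e' => r e' ≤ r e)).erase e)) := by
      refine Finset.sum_congr rfl (fun e he => ?_)
      simp only [hg]
      rw [hQfilter n e he]
    rw [this]
    exact tele' f hnorm r hrinj (Q n)
  have hgmem : memBasePoly f g := by
    refine ⟨?_, ?_, ?_⟩
    · intro e
      have hsub' : (univ.filter (fun e' => r e' ≤ r e)).erase e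
          ⊆ univ.filter (fun e' => r e' ≤ r e) := Finset.erase_subset _ _
      have := hmono hsub'
      simp only [hg]
      linarith
    · intro U
      calc ∑ e ∈ U, g e
          ≤ ∑ e ∈ U, (f (U.filter (fun e' => r e' ≤ r e))
              - f ((U.filter (fun e' => r e' ≤ r e)).erase e)) := by
            refine Finset.sum_le_sum (fun e he => ?_)
            simp only [hg]
            exact greedy_bound' f hsub r U e he
        _ = f U := tele' f hnorm r hrinj U
    · have h := tele' f hnorm r hrinj univ
      rw [← h]
  have hmemF : ∀ (e : α) (i : Fin k), e ∈ F i ↔ idx e = i := by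
    intro e i
    constructor
    · intro he; exact (huniq e i he).symm
    · intro he; exact he ▸ hidx e
  have hQsucc : ∀ (n : ℕ) (h : n < k),
      Q (n+1) = Q n ∪ F ⟨n, h⟩ ∧ Disjoint (Q n) (F ⟨n, h⟩) := by
    intro n hn
    constructor
    · ext e
      simp only [mem_union, hmemQ, hmemF]
      constructor
      · intro h
        rcases Nat.lt_succ_iff_lt_or_eq.mp h with h | h
        · exact Or.inl h
        · exact Or.inr (Fin.ext h)
      · rintro (h | h)
        · omega
        · rw [h]; exact Nat.lt_succ_self n
    · rw [Finset.disjoint_left]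
      intro e he hf
      rw [hmemQ] at he
      rw [hmemF] at hf
      rw [hf] at he
      exact absurd he (lt_irrefl n)
  set c' : ℕ → ℝ := fun n =>
    if h : n < k then c ⟨n, h⟩
    else if h0 : 0 < k then c ⟨k-1, by omega⟩ else 0 with hc'def
  have hc'lt : ∀ (n : ℕ) (h : n < k), c' n = c ⟨n, h⟩ := by
    intro n h; simp only [hc'def, dif_pos h]
  have hcoef : ∀ n < k, c' n ≤ c' (n+1) := by
    intro n hn
    rw [hc'lt n hn]
    by_cases h : n + 1 < k
    · rw [hc'lt _ h]
      exact (hc (by exact Fin.mk_lt_mk.mpr (Nat.lt_succ_self n))).le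
    · have hk : n + 1 = k := by omega
      have h0 : 0 < k := by omega
      simp only [hc'def, dif_neg h, dif_pos h0]
      apply le_of_eq
      congr 1
      exact Fin.ext (by simp only [Fin.val_mk]; omega)
  have hcoefpos : ∀ n, n + 1 < k → c' n < c' (n+1) := by
    intro n h
    rw [hc'lt n (by omega), hc'lt (n+1) h]
    exact hc (Fin.mk_lt_mk.mpr (Nat.lt_succ_self n))
  have hWsum : ∀ x : α → ℝ,
      ∑ e, w e * x e
        = ∑ n ∈ range k, c' n * ((∑ e ∈ Q (n+1), x e) - ∑ e ∈ Q n, x e) := by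
    intro x
    have huniv : (univ : Finset α) = (univ : Finset (Fin k)).biUnion F := by
      ext e
      simpa using ⟨idx e, hidx e⟩
    have hdisj : ∀ i ∈ (univ : Finset (Fin k)), ∀ j ∈ (univ : Finset (Fin k)),
        i ≠ j → Disjoint (F i) (F j) := by
      intro i _ j _ hij
      rw [Finset.disjoint_left]
      intro e hei hej
      exact hij (((hmemF e i).mp hei).symm.trans ((hmemF e j).mp hej))
    have hFi : ∀ i : Fin k, ∑ e ∈ F i, w e * x e
        = c' i.val * ((∑ e ∈ Q (i.val+1), x e) - ∑ e ∈ Q i.val, x e) := by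
      intro i
      obtain ⟨hun, hdj⟩ := hQsucc i.val i.isLt
      have heta : (⟨i.val, i.isLt⟩ : Fin k) = i := Fin.ext rfl
      rw [heta] at hun hdj
      have hlhs : ∑ e ∈ F i, w e * x e = c' i.val * ∑ e ∈ F i, x e := by
        rw [Finset.mul_sum]
        refine Finset.sum_congr rfl (fun e he => ?_)
        rw [hlev i e he, hc'lt i.val i.isLt, heta]
      rw [hlhs, hun, Finset.sum_union hdj]
      ring
    calc ∑ e, w e * x e = ∑ i : Fin k, ∑ e ∈ F i, w e * x e := by
          rw [huniv, Finset.sum_biUnion hdisj]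
      _ = ∑ i : Fin k, c' i.val * ((∑ e ∈ Q (i.val+1), x e) - ∑ e ∈ Q i.val, x e) :=
          Finset.sum_congr rfl (fun i _ => hFi i)
      _ = ∑ n ∈ range k, c' n * ((∑ e ∈ Q (n+1), x e) - ∑ e ∈ Q n, x e) :=
          Fin.sum_univ_eq_sum_range
            (fun n => c' n * ((∑ e ∈ Q (n+1), x e) - ∑ e ∈ Q n, x e)) k
  have hsx0 : ∀ x : α → ℝ, ∑ e ∈ Q 0, x e = 0 := by
    intro x; rw [hQ0]; simp
  have hsxk : ∀ x : α → ℝ, ∑ e ∈ Q k, x e = ∑ e, x e := by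
    intro x; rw [hQk k le_rfl]
  have hdiff : ∀ x y : α → ℝ, (∑ e, x e) = (∑ e, y e) →
      (∑ e, w e * x e) - (∑ e, w e * y e)
        = -∑ n ∈ range k, (c' (n+1) - c' n)
            * ((∑ e ∈ Q (n+1), x e) - (∑ e ∈ Q (n+1), y e)) := by
    intro x y hxy
    rw [hWsum x, hWsum y,
      abel_sum' c' (fun n => ∑ e ∈ Q n, x e) k,
      abel_sum' c' (fun n => ∑ e ∈ Q n, y e) k]
    simp only [mul_sub, sub_mul, Finset.sum_sub_distrib]
    rw [hsxk x, hsxk y, hsx0 x, hsx0 y, hxy]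
    ring
  have hPQ : ∀ i : Fin k, (univ.filter (fun j : Fin k => j ≤ i)).biUnion F = Q (i.val + 1) := by
    intro i
    simp only [hQdef]
    congr 1
    ext j
    simp only [mem_filter, mem_univ, true_and, Fin.le_def]
    omega
  constructor
  · intro hmin i
    rw [hPQ i]
    by_contra hne
    have hle : ∑ e ∈ Q (i.val+1), z e ≤ f (Q (i.val+1)) := hz.2.1 _
    have hlt : ∑ e ∈ Q (i.val+1), z e < f (Q (i.val+1)) := lt_of_le_of_ne hle hne
    have h2 : i.val + 1 ≠ k := by
      intro hk
      rw [hk, hQk k le_rfl, hz.2.2] at hlt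
      exact lt_irrefl _ hlt
    have h3 : i.val + 1 < k := lt_of_le_of_ne i.isLt h2
    have hWg := hdiff g z (by rw [hgmem.2.2, hz.2.2])
    have hterm : ∀ n ∈ range k,
        0 ≤ (c' (n+1) - c' n) * ((∑ e ∈ Q (n+1), g e) - ∑ e ∈ Q (n+1), z e) := by
      intro n hn
      rw [mem_range] at hn
      apply mul_nonneg
      · linarith [hcoef n hn]
      · rw [hgQ (n+1)]
        linarith [hz.2.1 (Q (n+1))]
    have hipos : 0 < (c' (i.val+1) - c' i.val)
        * ((∑ e ∈ Q (i.val+1), g e) - ∑ e ∈ Q (i.val+1), z e) := by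
      apply mul_pos
      · linarith [hcoefpos i.val h3]
      · rw [hgQ (i.val+1)]
        linarith
    have hpos : 0 < ∑ n ∈ range k, (c' (n+1) - c' n)
        * ((∑ e ∈ Q (n+1), g e) - ∑ e ∈ Q (n+1), z e) :=
      Finset.sum_pos' hterm ⟨i.val, mem_range.mpr (by omega), hipos⟩
    have hlt2 : ∑ e, w e * g e < ∑ e, w e * z e := by linarith
    linarith [hmin g hgmem]
  · intro ht z' hz'
    have hd := hdiff z z' (by rw [hz.2.2, hz'.2.2])
    have htQ : ∀ n < k, ∑ e ∈ Q (n+1), z e = f (Q (n+1)) := by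
      intro n hn
      have := ht ⟨n, hn⟩
      rwa [hPQ ⟨n, hn⟩] at this
    have hnn : 0 ≤ ∑ n ∈ range k, (c' (n+1) - c' n)
        * ((∑ e ∈ Q (n+1), z e) - ∑ e ∈ Q (n+1), z' e) := by
      apply Finset.sum_nonneg
      intro n hn
      rw [mem_range] at hn
      apply mul_nonneg
      · linarith [hcoef n hn]
      · rw [htQ n hn]
        linarith [hz'.2.1 (Q (n+1))]
    linarith
end

section
/- Let M = (E, ℐ) be a matroid with rank function r, and let L ∈ ℝ^{E×E} be a symmetric loss matrix (L^T = L). Let x be in the base polytope B(M), and partition E into P₁,...,P_k so that (Lx)(e) = c_i for e ∈ P_i with c₁ < ... < c_k. Then (x, x) is a symmetric Nash equilibrium of the zero-sum game min_{z∈B(M)} max_{w∈B(M)} z^T L w if and only if all bases of M have the same total weight with respect to the weight vector Lx. -/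
open Finset Matrix

/-- A matroid on a finite ground set, given by its independent sets. -/
structure FinMatroid (α : Type*) [Fintype α] [DecidableEq α] where
  Indep : Finset α → Prop
  indep_empty : Indep ∅
  indep_subset : ∀ ⦃A B : Finset α⦄, Indep B → A ⊆ B → Indep A
  indep_exchange : ∀ ⦃A B : Finset α⦄, Indep A → Indep B → A.card < B.card →
    ∃ e ∈ B, e ∉ A ∧ Indep (insert e A)

attribute [instance] Classical.propDecidable

/-- The rank of a set: maximum cardinality of an independent subset. -/
noncomputable def FinMatroid.rank {α : Type*} [Fintype α] [DecidableEq α]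
    (M : FinMatroid α) (S : Finset α) : ℕ :=
  (S.powerset.filter (fun A => M.Indep A)).sup Finset.card

/-- A base: a maximal independent set. -/
def FinMatroid.IsBase {α : Type*} [Fintype α] [DecidableEq α]
    (M : FinMatroid α) (B : Finset α) : Prop :=
  M.Indep B ∧ ∀ A : Finset α, M.Indep A → B ⊆ A → A = B

/-- Membership in the matroid base polytope `B(M)`. -/
noncomputable def FinMatroid.memBasePolytope {α : Type*} [Fintype α] [DecidableEq α]
    (M : FinMatroid α) (x : α → ℝ) : Prop :=
  (∀ e, 0 ≤ x e) ∧ (∀ S : Finset α, ∑ e ∈ S, x e ≤ (M.rank S : ℝ)) ∧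
    (∑ e, x e = (M.rank univ : ℝ))

namespace FinMatroid

variable {α : Type*} [Fintype α] [DecidableEq α] (M : FinMatroid α)

lemma card_le_rank {I S : Finset α} (hI : M.Indep I) (hIS : I ⊆ S) : I.card ≤ M.rank S :=
  Finset.le_sup (by simp only [Finset.mem_filter, Finset.mem_powerset]; exact ⟨hIS, hI⟩)

lemma exists_rank (S : Finset α) : ∃ A, A ⊆ S ∧ M.Indep A ∧ A.card = M.rank S := by
  have hne : (S.powerset.filter (fun A => M.Indep A)).Nonempty :=
    ⟨∅, by simp only [Finset.mem_filter, Finset.mem_powerset]; exact ⟨Finset.empty_subset S, M.indep_empty⟩⟩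
  obtain ⟨A, hA, hcard⟩ := Finset.exists_mem_eq_sup _ hne Finset.card
  simp only [Finset.mem_filter, Finset.mem_powerset] at hA
  exact ⟨A, hA.1, hA.2, hcard.symm⟩

lemma augment {I S : Finset α} (hI : M.Indep I) (hIS : I ⊆ S) (h : I.card < M.rank S) :
    ∃ e ∈ S, e ∉ I ∧ M.Indep (insert e I) := by
  obtain ⟨A, hAS, hA, hcard⟩ := M.exists_rank S
  obtain ⟨e, heA, heI, hins⟩ := M.indep_exchange hI hA (by omega)
  exact ⟨e, hAS heA, heI, hins⟩

lemma extend {S : Finset α} : ∀ (n : ℕ) (I : Finset α), M.Indep I → I ⊆ S →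
    M.rank S - I.card ≤ n → ∃ J, I ⊆ J ∧ J ⊆ S ∧ M.Indep J ∧ J.card = M.rank S := by
  intro n
  induction n with
  | zero =>
    intro I hI hIS h
    have := M.card_le_rank hI hIS
    exact ⟨I, Finset.Subset.refl I, hIS, hI, by omega⟩
  | succ n ih =>
    intro I hI hIS h
    by_cases hlt : I.card < M.rank S
    · obtain ⟨e, heS, heI, hins⟩ := M.augment hI hIS hlt
      obtain ⟨J, h1, h2, h3, h4⟩ := ih (insert e I) hins (Finset.insert_subset heS hIS)
        (by rw [Finset.card_insert_of_notMem heI]; omega)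
      exact ⟨J, (Finset.subset_insert e I).trans h1, h2, h3, h4⟩
    · have := M.card_le_rank hI hIS
      exact ⟨I, Finset.Subset.refl I, hIS, hI, by omega⟩

lemma greedy_chain (T : ℕ → Finset α) (hmono : ∀ m, T m ⊆ T (m + 1)) :
    ∀ n : ℕ, ∃ B, M.Indep B ∧ B ⊆ T n ∧ ∀ m ≤ n, (B ∩ T m).card = M.rank (T m) := by
  intro n
  induction n with
  | zero =>
    obtain ⟨A, hAS, hA, hcard⟩ := M.exists_rank (T 0)
    refine ⟨A, hA, hAS, ?_⟩
    intro m hm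
    have hm0 : m = 0 := Nat.le_zero.mp hm
    subst hm0
    rw [Finset.inter_eq_left.mpr hAS, hcard]
  | succ n ih =>
    obtain ⟨B, hB, hBT, hint⟩ := ih
    obtain ⟨J, hBJ, hJT, hJ, hJcard⟩ :=
      M.extend (M.rank (T (n + 1))) B hB (hBT.trans (hmono n)) (by omega)
    refine ⟨J, hJ, hJT, ?_⟩
    intro m hm
    rcases Nat.lt_or_ge m (n + 1) with h | h
    · have hle : M.rank (T m) ≤ (J ∩ T m).card := by
        rw [← hint m (Nat.lt_succ_iff.mp h)]
        exact Finset.card_le_card (Finset.inter_subset_inter hBJ (Finset.Subset.refl _))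
      have hge : (J ∩ T m).card ≤ M.rank (T m) :=
        M.card_le_rank (M.indep_subset hJ Finset.inter_subset_left) Finset.inter_subset_right
      omega
    · have hmn : m = n + 1 := le_antisymm hm h
      subst hmn
      rw [Finset.inter_eq_left.mpr hJT, hJcard]

lemma base_card {B : Finset α} (hB : M.IsBase B) : B.card = M.rank univ := by
  refine le_antisymm (M.card_le_rank hB.1 (Finset.subset_univ B)) ?_
  by_contra h
  push_neg at h
  obtain ⟨e, _, heB, hins⟩ := M.augment hB.1 (Finset.subset_univ B) h
  have heq := hB.2 (insert e B) hins (Finset.subset_insert e B)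
  exact heB (by rw [← heq]; exact Finset.mem_insert_self e B)

lemma isBase_of_card {J : Finset α} (hJ : M.Indep J) (h : J.card = M.rank univ) :
    M.IsBase J := by
  refine ⟨hJ, fun A hA hJA => ?_⟩
  have : A.card ≤ J.card := by
    rw [h]; exact M.card_le_rank hA (Finset.subset_univ A)
  exact (Finset.eq_of_subset_of_card_le hJA this).symm

lemma indicator_sum (B S : Finset α) :
    ∑ e ∈ S, (if e ∈ B then (1 : ℝ) else 0) = ((S ∩ B).card : ℝ) := by
  rw [Finset.sum_ite_mem, Finset.sum_const, nsmul_eq_mul, mul_one]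

lemma indicator_mem {B : Finset α} (hB : M.IsBase B) :
    M.memBasePolytope (fun e => if e ∈ B then (1 : ℝ) else 0) := by
  refine ⟨fun e => by dsimp only; split <;> norm_num, fun S => ?_, ?_⟩
  · rw [indicator_sum]
    have h1 : S ∩ B ⊆ B := Finset.inter_subset_right
    have h2 : (S ∩ B).card ≤ M.rank S :=
      M.card_le_rank (M.indep_subset hB.1 h1) Finset.inter_subset_left
    exact_mod_cast h2
  · rw [indicator_sum, Finset.univ_inter, M.base_card hB]

end FinMatroid

/-- for a symmetric loss matrix `L` and `x ∈ B(M)` with level-set partition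
`P₁,…,P_k` of `Lx`, the pair `(x,x)` is a symmetric Nash equilibrium iff all bases of `M`
have the same total weight with respect to the weight vector `Lx`. -/
theorem symmetric_nash_iff_bases_equal_weight {α : Type*} [Fintype α] [DecidableEq α]
    (M : FinMatroid α)
    (L : Matrix α α ℝ) (hL : L.IsSymm)
    (x : α → ℝ) (hx : M.memBasePolytope x)
    (k : ℕ) (c : Fin k → ℝ) (hc : StrictMono c)
    (P : Fin k → Finset α)
    (hpart : ∀ e : α, ∃! i : Fin k, e ∈ P i)
    (hlev : ∀ i : Fin k, ∀ e ∈ P i, L.mulVec x e = c i) :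
    ((∀ y : α → ℝ, M.memBasePolytope y → x ⬝ᵥ L.mulVec y ≤ x ⬝ᵥ L.mulVec x) ∧
     (∀ z : α → ℝ, M.memBasePolytope z → x ⬝ᵥ L.mulVec x ≤ z ⬝ᵥ L.mulVec x)) ↔
    (∀ B₁ B₂ : Finset α, M.IsBase B₁ → M.IsBase B₂ →
      ∑ e ∈ B₁, L.mulVec x e = ∑ e ∈ B₂, L.mulVec x e) := by
  classical
  set w : α → ℝ := L.mulVec x with hw0
  -- rewrite the bilinear forms in terms of w
  have hdot1 : ∀ y : α → ℝ, x ⬝ᵥ L.mulVec y = w ⬝ᵥ y := by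
    intro y
    rw [Matrix.dotProduct_mulVec]
    congr 1
    rw [← Matrix.mulVec_transpose, hL.eq]
  have hdot2 : ∀ z : α → ℝ, z ⬝ᵥ L.mulVec x = w ⬝ᵥ z := fun z => dotProduct_comm _ _
  -- the index of the level set containing e
  have hidx : ∀ e : α, ∃ i : Fin k, e ∈ P i := fun e => ⟨(hpart e).choose, (hpart e).choose_spec.1⟩
  set idx : α → Fin k := fun e => (hpart e).choose with hidxdef
  have hmemP : ∀ e, e ∈ P (idx e) := fun e => (hpart e).choose_spec.1
  have hwc : ∀ e, w e = c (idx e) := fun e => hlev _ e (hmemP e)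
  -- prefix sets
  set U : ℕ → Finset α := fun t => univ.filter (fun e => ((idx e : ℕ) < t)) with hUdef
  have hUmono : ∀ m, U m ⊆ U (m + 1) := by
    intro m e he
    simp only [hUdef, Finset.mem_filter, Finset.mem_univ, true_and] at he ⊢
    omega
  have hUk : ∀ t, k ≤ t → U t = univ := by
    intro t ht
    ext e
    simp only [hUdef, Finset.mem_filter, Finset.mem_univ, true_and, iff_true]
    exact lt_of_lt_of_le (idx e).isLt ht
  -- suffix sets, as an increasing chain
  set V : ℕ → Finset α := fun m => univ.filter (fun e => k - m ≤ (idx e : ℕ)) with hVdef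
  have hVmono : ∀ m, V m ⊆ V (m + 1) := by
    intro m e he
    simp only [hVdef, Finset.mem_filter, Finset.mem_univ, true_and] at he ⊢
    omega
  have hVk : V k = univ := by
    ext e
    simp only [hVdef, Finset.mem_filter, Finset.mem_univ, true_and, iff_true]
    omega
  have hVT : ∀ t ≤ k, V (k - t) = univ.filter (fun e => t ≤ (idx e : ℕ)) := by
    intro t ht
    ext e
    simp only [hVdef, Finset.mem_filter, Finset.mem_univ, true_and]
    omega
  -- complement relation between U t and the suffix set
  have hsplit : ∀ (t : ℕ) (y : α → ℝ),
      (∑ e ∈ U t, y e) + ∑ e ∈ univ.filter (fun e => t ≤ (idx e : ℕ)), y e = ∑ e, y e := by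
    intro t y
    have := Finset.sum_filter_add_sum_filter_not univ (fun e => ((idx e : ℕ) < t)) y
    rw [← this]
    congr 1
    apply Finset.sum_congr _ (fun _ _ => rfl)
    ext e
    simp only [Finset.mem_filter, Finset.mem_univ, true_and]
    omega
  -- the extended coefficient function
  set c' : ℕ → ℝ := fun i => if h : i < k then c ⟨i, h⟩ else 0 with hc'def
  -- fiber sums
  set s : (α → ℝ) → ℕ → ℝ :=
    fun y j => ∑ e ∈ univ.filter (fun e => (idx e : ℕ) = j), y e with hsdef
  have hpref : ∀ (t : ℕ) (y : α → ℝ), ∑ j ∈ range t, s y j = ∑ e ∈ U t, y e := by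
    intro t y
    induction t with
    | zero =>
      simp only [Finset.range_zero, Finset.sum_empty]
      have : U 0 = ∅ := by
        ext e
        simp [hUdef]
      rw [this, Finset.sum_empty]
    | succ t ih =>
      rw [Finset.sum_range_succ, ih]
      have hsp := Finset.sum_filter_add_sum_filter_not (U (t + 1)) (fun e => ((idx e : ℕ) < t)) y
      have h1 : (U (t + 1)).filter (fun e => ((idx e : ℕ) < t)) = U t := by
        ext e
        simp only [hUdef, Finset.mem_filter, Finset.mem_univ, true_and]
        omega
      have h2 : (U (t + 1)).filter (fun e => ¬((idx e : ℕ) < t)) =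
          univ.filter (fun e => (idx e : ℕ) = t) := by
        ext e
        simp only [hUdef, Finset.mem_filter, Finset.mem_univ, true_and]
        omega
      rw [h1, h2] at hsp
      rw [← hsp, hsdef]
  -- decomposition of the bilinear form into fibers
  have hdecomp : ∀ y : α → ℝ, w ⬝ᵥ y = ∑ j ∈ range k, c' j * s y j := by
    intro y
    have h0 : w ⬝ᵥ y = ∑ e ∈ U k, w e * y e := by
      rw [hUk k le_rfl]; rfl
    rw [h0, ← hpref k (fun e => w e * y e)]
    apply Finset.sum_congr rfl
    intro j hj
    simp only [Finset.mem_range] at hj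
    rw [hsdef]
    simp only
    rw [Finset.mul_sum]
    apply Finset.sum_congr rfl
    intro e he
    simp only [Finset.mem_filter, Finset.mem_univ, true_and] at he
    rw [hwc e]
    congr 1
    rw [hc'def]
    simp only [dif_pos hj]
    congr 1
    exact Fin.ext he
  -- summation by parts
  have hparts : ∀ y : α → ℝ, w ⬝ᵥ y =
      c' (k - 1) * (∑ e, y e) -
        ∑ i ∈ range (k - 1), (c' (i + 1) - c' i) * (∑ e ∈ U (i + 1), y e) := by
    intro y
    rw [hdecomp y]
    have := Finset.sum_range_by_parts c' (s y) k
    simp only [smul_eq_mul] at this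
    rw [this, hpref k y, hUk k le_rfl]
    congr 1
    apply Finset.sum_congr rfl
    intro i _
    rw [hpref (i + 1) y]
  -- comparison lemma: larger prefix sums give smaller value
  have hcompare : ∀ y z : α → ℝ, (∑ e, y e) = (∑ e, z e) →
      (∀ t, 0 < t → t < k → (∑ e ∈ U t, y e) ≤ ∑ e ∈ U t, z e) → w ⬝ᵥ z ≤ w ⬝ᵥ y := by
    intro y z htot hpre
    rw [hparts y, hparts z, htot]
    apply sub_le_sub_left
    apply Finset.sum_le_sum
    intro i hi
    simp only [Finset.mem_range] at hi
    have hik : i < k := by omega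
    have hik1 : i + 1 < k := by omega
    have h1 : c' i < c' (i + 1) := by
      rw [hc'def]
      simp only [dif_pos hik, dif_pos hik1]
      exact hc (by exact Fin.mk_lt_mk.mpr (Nat.lt_succ_self i))
    have h2 := hpre (i + 1) (Nat.succ_pos i) hik1
    exact mul_le_mul_of_nonneg_left h2 (by linarith)
  -- indicator vectors
  set χ : Finset α → (α → ℝ) := fun B e => if e ∈ B then (1 : ℝ) else 0 with hχdef
  have hwchi : ∀ B : Finset α, w ⬝ᵥ χ B = ∑ e ∈ B, w e := by
    intro B
    show (∑ e, w e * (if e ∈ B then (1 : ℝ) else 0)) = _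
    have : ∀ e, w e * (if e ∈ B then (1 : ℝ) else 0) = if e ∈ B then w e else 0 := by
      intro e; split <;> simp
    simp only [this]
    rw [Finset.sum_ite_mem, Finset.univ_inter]
  have hchisum : ∀ (B : Finset α) (S : Finset α),
      ∑ e ∈ S, χ B e = ((S ∩ B).card : ℝ) := fun B S => FinMatroid.indicator_sum B S
  -- the minimising base
  obtain ⟨Bmin, hBmin_ind, hBmin_sub, hBmin_int⟩ := M.greedy_chain U hUmono k
  have hBmin_base : M.IsBase Bmin := by
    apply M.isBase_of_card hBmin_ind
    have := hBmin_int k le_rfl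
    rw [hUk k le_rfl, Finset.inter_univ] at this
    exact this
  have hBmin_le : ∀ y : α → ℝ, M.memBasePolytope y → w ⬝ᵥ χ Bmin ≤ w ⬝ᵥ y := by
    intro y hy
    apply hcompare y (χ Bmin)
    · rw [hy.2.2, hchisum Bmin univ, Finset.univ_inter, M.base_card hBmin_base]
    · intro t ht htk
      rw [hchisum Bmin (U t), Finset.inter_comm, hBmin_int t (le_of_lt htk)]
      exact hy.2.1 (U t)
  -- the maximising base
  obtain ⟨Bmax, hBmax_ind, hBmax_sub, hBmax_int⟩ := M.greedy_chain V hVmono k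
  have hBmax_base : M.IsBase Bmax := by
    apply M.isBase_of_card hBmax_ind
    have := hBmax_int k le_rfl
    rw [hVk, Finset.inter_univ] at this
    exact this
  have hBmax_ge : ∀ y : α → ℝ, M.memBasePolytope y → w ⬝ᵥ y ≤ w ⬝ᵥ χ Bmax := by
    intro y hy
    apply hcompare (χ Bmax) y
    · rw [hy.2.2, hchisum Bmax univ, Finset.univ_inter, M.base_card hBmax_base]
    · intro t ht htk
      -- prefix sum of the indicator of Bmax equals rank univ - rank (suffix set)
      have hVt : V (k - t) = univ.filter (fun e => t ≤ (idx e : ℕ)) := hVT t (le_of_lt htk)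
      have hcardsplit : (U t ∩ Bmax).card + ((univ.filter (fun e => t ≤ (idx e : ℕ))) ∩ Bmax).card
          = Bmax.card := by
        have hfc := Finset.card_filter_add_card_filter_not
          (s := Bmax) (p := fun e => ((idx e : ℕ) < t))
        have e1 : Bmax.filter (fun e => ((idx e : ℕ) < t)) = U t ∩ Bmax := by
          ext e
          simp only [hUdef, Finset.mem_filter, Finset.mem_univ, true_and, Finset.mem_inter]
          tauto
        have e2 : Bmax.filter (fun e => ¬((idx e : ℕ) < t)) =
            (univ.filter (fun e => t ≤ (idx e : ℕ))) ∩ Bmax := by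
          ext e
          simp only [Finset.mem_filter, Finset.mem_univ, true_and, Finset.mem_inter, not_lt]
          tauto
        rw [e1, e2] at hfc
        exact hfc
      have hsuffix : ((univ.filter (fun e => t ≤ (idx e : ℕ))) ∩ Bmax).card
          = M.rank (univ.filter (fun e => t ≤ (idx e : ℕ))) := by
        rw [← hVt, Finset.inter_comm]
        exact hBmax_int (k - t) (by omega)
      -- prefix of χ Bmax
      rw [hchisum Bmax (U t)]
      -- prefix of y
      have hy_suffix : ∑ e ∈ univ.filter (fun e => t ≤ (idx e : ℕ)), y e ≤
          (M.rank (univ.filter (fun e => t ≤ (idx e : ℕ))) : ℝ) := hy.2.1 _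
      have hy_split := hsplit t y
      have hy_total := hy.2.2
      have hBcard : (Bmax.card : ℝ) = (M.rank univ : ℝ) := by
        exact_mod_cast congrArg Nat.cast (M.base_card hBmax_base)
      have : ((U t ∩ Bmax).card : ℝ) =
          (M.rank univ : ℝ) - (M.rank (univ.filter (fun e => t ≤ (idx e : ℕ))) : ℝ) := by
        have := hcardsplit
        have hq : ((U t ∩ Bmax).card : ℝ) + (((univ.filter (fun e => t ≤ (idx e : ℕ))) ∩ Bmax).card : ℝ)
            = (Bmax.card : ℝ) := by exact_mod_cast congrArg Nat.cast this
        rw [hsuffix] at hq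
        linarith [hBcard]
      rw [this]
      linarith
  -- the indicator of any base lies in the base polytope
  have hchimem : ∀ B : Finset α, M.IsBase B → M.memBasePolytope (χ B) :=
    fun B hB => M.indicator_mem hB
  -- now the main equivalence
  constructor
  · rintro ⟨h1, h2⟩ B₁ B₂ hB₁ hB₂
    have key : ∀ B : Finset α, M.IsBase B → ∑ e ∈ B, w e = w ⬝ᵥ x := by
      intro B hB
      have hm := hchimem B hB
      have ha := h1 (χ B) hm
      have hb := h2 (χ B) hm
      rw [hdot1] at ha
      rw [hdot1 x] at ha hb
      rw [hdot2] at hb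
      rw [← hwchi B]
      linarith
    rw [show (∑ e ∈ B₁, L.mulVec x e) = ∑ e ∈ B₁, w e from rfl,
      show (∑ e ∈ B₂, L.mulVec x e) = ∑ e ∈ B₂, w e from rfl, key B₁ hB₁, key B₂ hB₂]
  · intro hRHS
    have hWeq : w ⬝ᵥ χ Bmin = w ⬝ᵥ χ Bmax := by
      rw [hwchi, hwchi]
      exact hRHS Bmin Bmax hBmin_base hBmax_base
    have hconst : ∀ y : α → ℝ, M.memBasePolytope y → w ⬝ᵥ y = w ⬝ᵥ χ Bmin := by
      intro y hy
      have h1 := hBmin_le y hy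
      have h2 := hBmax_ge y hy
      rw [← hWeq] at h2
      linarith
    have hxc := hconst x hx
    constructor
    · intro y hy
      rw [hdot1 y, hdot1 x, hconst y hy, hxc]
    · intro z hz
      rw [hdot1 x, hdot2 z, hconst z hz, hxc]
end

section
/- Let M = (E, ℐ) be a matroid with rank function r, and let E be partitioned into sets P₁,...,P_k. Suppose weights w ∈ ℝ^E are constant on each P_i with distinct values c₁ < ... < c_k. Then all bases of M have the same weight Σ_{e∈B} w(e) if and only if every base B satisfies |B ∩ P_i| = r(P_i) for all i. -/
open Finset Matrix

/-- A circuit: a minimal dependent set. -/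
def FinMatroid.IsCircuit {α : Type*} [Fintype α] [DecidableEq α]
    (M : FinMatroid α) (C : Finset α) : Prop :=
  ¬ M.Indep C ∧ ∀ e ∈ C, M.Indep (C.erase e)

namespace FinMatroid
variable {α : Type*} [Fintype α] [DecidableEq α] (M : FinMatroid α)

lemma card_le_rank' {A S : Finset α} (hA : M.Indep A) (hAS : A ⊆ S) :
    A.card ≤ M.rank S :=
  Finset.le_sup (by simp [Finset.mem_filter, Finset.mem_powerset, hAS, hA])

lemma exists_rank_set' (S : Finset α) :
    ∃ I, I ⊆ S ∧ M.Indep I ∧ I.card = M.rank S := by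
  have hne : (S.powerset.filter (fun A => M.Indep A)).Nonempty :=
    ⟨∅, by simp [M.indep_empty]⟩
  obtain ⟨I, hI, hcard⟩ := Finset.exists_mem_eq_sup _ hne Finset.card
  simp only [Finset.mem_filter, Finset.mem_powerset] at hI
  exact ⟨I, hI.1, hI.2, hcard.symm⟩

lemma card_le_base' {A B : Finset α} (hB : M.IsBase B) (hA : M.Indep A) :
    A.card ≤ B.card := by
  by_contra h
  push_neg at h
  obtain ⟨e, _, heB, hins⟩ := M.indep_exchange hB.1 hA h
  have := hB.2 _ hins (Finset.subset_insert _ _)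
  exact heB (this ▸ Finset.mem_insert_self e B)

lemma exists_base_between' {B : Finset α} (hB : M.IsBase B) {e : α}
    {J : Finset α} (hJ : M.Indep J) (hJsub : J ⊆ insert e B) :
    ∃ B', M.IsBase B' ∧ J ⊆ B' ∧ B' ⊆ insert e B ∧ B'.card = B.card := by
  classical
  set cand := (insert e B).powerset.filter (fun A => J ⊆ A ∧ M.Indep A) with hcand
  have hne : cand.Nonempty := ⟨J, by simp [hcand, hJsub, hJ]⟩
  obtain ⟨B', hB'mem, hsup⟩ := Finset.exists_mem_eq_sup cand hne Finset.card
  simp only [hcand, Finset.mem_filter, Finset.mem_powerset] at hB'mem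
  obtain ⟨hB'sub, hJB', hB'indep⟩ := hB'mem
  have hmax : ∀ A : Finset α, A ⊆ insert e B → J ⊆ A → M.Indep A → A.card ≤ B'.card := by
    intro A h1 h2 h3
    rw [← hsup]
    exact Finset.le_sup (by simp [hcand, h1, h2, h3])
  have hcard_ge : B.card ≤ B'.card := by
    by_contra h
    push_neg at h
    obtain ⟨x, hxB, hxB', hins⟩ := M.indep_exchange hB'indep hB.1 h
    have hle := hmax (insert x B')
      (Finset.insert_subset (Finset.mem_insert_of_mem hxB) hB'sub)
      (hJB'.trans (Finset.subset_insert _ _)) hins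
    rw [Finset.card_insert_of_notMem hxB'] at hle
    omega
  have hcard : B'.card = B.card := le_antisymm (M.card_le_base' hB hB'indep) hcard_ge
  refine ⟨B', ⟨hB'indep, ?_⟩, hJB', hB'sub, hcard⟩
  intro A hA hsubA
  have h1 : A.card ≤ B.card := M.card_le_base' hB hA
  exact (Finset.eq_of_subset_of_card_le hsubA (by omega)).symm

end FinMatroid

/-- if the weights `w` are constant on each part `Pᵢ` of a partition of the
ground set with distinct values `c₁ < … < c_k`, then all bases have the same weight iff
every base `B` satisfies `|B ∩ Pᵢ| = r(Pᵢ)` for all `i`. -/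
theorem bases_equal_weight_iff_full_rank_intersection {α : Type*} [Fintype α] [DecidableEq α]
    (M : FinMatroid α)
    (k : ℕ) (P : Fin k → Finset α)
    (hpart : ∀ e : α, ∃! i : Fin k, e ∈ P i)
    (w : α → ℝ) (c : Fin k → ℝ) (hc : StrictMono c)
    (hw : ∀ i : Fin k, ∀ e ∈ P i, w e = c i) :
    (∀ B₁ B₂ : Finset α, M.IsBase B₁ → M.IsBase B₂ →
      ∑ e ∈ B₁, w e = ∑ e ∈ B₂, w e) ↔
    (∀ B : Finset α, M.IsBase B → ∀ i : Fin k, (B ∩ P i).card = M.rank (P i)) := by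
  constructor
  · -- forward direction
    intro heq B hB i
    refine le_antisymm (M.card_le_rank' (M.indep_subset hB.1 (Finset.inter_subset_left))
      (Finset.inter_subset_right)) ?_
    by_contra hlt
    push_neg at hlt
    obtain ⟨I, hIsub, hIindep, hIcard⟩ := M.exists_rank_set' (P i)
    have hBPindep : M.Indep (B ∩ P i) := M.indep_subset hB.1 Finset.inter_subset_left
    obtain ⟨e, heI, heBP, hins⟩ := M.indep_exchange hBPindep hIindep (by omega)
    have hePi : e ∈ P i := hIsub heI
    have heB : e ∉ B := fun h => heBP (Finset.mem_inter.2 ⟨h, hePi⟩)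
    have hJsub : insert e (B ∩ P i) ⊆ insert e B :=
      Finset.insert_subset_insert _ Finset.inter_subset_left
    obtain ⟨B', hB', hJB', hB'sub, hB'card⟩ := M.exists_base_between' hB hins hJsub
    have heB' : e ∈ B' := hJB' (Finset.mem_insert_self _ _)
    -- identify the removed element f
    have hKsub : B'.erase e ⊆ B := by
      intro x hx
      rcases Finset.mem_insert.1 (hB'sub (Finset.mem_of_mem_erase hx)) with h | h
      · exact absurd h (Finset.ne_of_mem_erase hx)
      · exact h
    have hKcard : (B'.erase e).card = B.card - 1 := by
      rw [Finset.card_erase_of_mem heB', hB'card]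
    have hBposs : 1 ≤ B.card := Finset.card_pos.2 ⟨e, heB'⟩ |>.trans_eq hB'card
    have hDcard : (B \ B'.erase e).card = 1 := by
      rw [Finset.card_sdiff_of_subset hKsub, hKcard]
      omega
    obtain ⟨f, hf⟩ := Finset.card_eq_one.1 hDcard
    have hfB : f ∈ B := (Finset.mem_sdiff.1 (hf ▸ Finset.mem_singleton_self f)).1
    have hfK : f ∉ B'.erase e := (Finset.mem_sdiff.1 (hf ▸ Finset.mem_singleton_self f)).2
    have hfe : f ≠ e := fun h => heB (h ▸ hfB)
    have hfB' : f ∉ B' := fun h => hfK (Finset.mem_erase.2 ⟨hfe, h⟩)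
    have hfPi : f ∉ P i := by
      intro h
      exact hfB' (hJB' (Finset.mem_insert_of_mem (Finset.mem_inter.2 ⟨hfB, h⟩)))
    -- B = insert f (B'.erase e), B' = insert e (B'.erase e)
    have hBeq : B = insert f (B'.erase e) := by
      apply Finset.eq_of_subset_of_card_le
      · intro x hx
        by_cases hx' : x ∈ B'.erase e
        · exact Finset.mem_insert_of_mem hx'
        · have : x ∈ B \ B'.erase e := Finset.mem_sdiff.2 ⟨hx, hx'⟩
          rw [hf] at this
          exact Finset.mem_insert.2 (Or.inl (Finset.mem_singleton.1 this))
      · rw [Finset.card_insert_of_notMem hfK, hKcard]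
        omega
    have hB'eq : B' = insert e (B'.erase e) := (Finset.insert_erase heB').symm
    -- weights differ
    have hsum := heq B B' hB hB'
    have h1 : ∑ x ∈ B, w x = w f + ∑ x ∈ B'.erase e, w x := by
      rw [hBeq, Finset.sum_insert hfK]
    have h2 : ∑ x ∈ B', w x = w e + ∑ x ∈ B'.erase e, w x := by
      conv_lhs => rw [hB'eq]
      rw [Finset.sum_insert (Finset.notMem_erase e B')]
    have hwf_we : w f = w e := by
      rw [h1, h2] at hsum; linarith
    obtain ⟨j, hfPj⟩ := (hpart f).exists
    have hji : j ≠ i := fun h => hfPi (h ▸ hfPj)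
    have : c j = c i := by
      rw [← hw j f hfPj, ← hw i e hePi, hwf_we]
    exact hji (hc.injective this)
  · -- reverse direction
    intro h B₁ B₂ hB₁ hB₂
    have key : ∀ B : Finset α, M.IsBase B →
        ∑ e ∈ B, w e = ∑ i : Fin k, (M.rank (P i) : ℝ) * c i := by
      intro B hB
      have idx : ∀ e : α, ∃ i, e ∈ P i := fun e => (hpart e).exists
      choose f hf using idx
      rw [← Finset.sum_fiberwise_of_maps_to (g := f)
        (fun x _ => Finset.mem_univ (f x)) w]
      refine Finset.sum_congr rfl fun i _ => ?_
      have hfib : B.filter (fun x => f x = i) = B ∩ P i := by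
        ext x
        simp only [Finset.mem_filter, Finset.mem_inter]
        constructor
        · rintro ⟨hx, rfl⟩; exact ⟨hx, hf x⟩
        · rintro ⟨hx, hxP⟩; exact ⟨hx, (hpart x).unique (hf x) hxP⟩
      rw [hfib, Finset.sum_congr rfl (fun e he => hw i e (Finset.mem_inter.1 he).2),
        Finset.sum_const, h B hB i, nsmul_eq_mul]
    rw [key B₁ hB₁, key B₂ hB₂]
end

section
/- Let M = (E, ℐ) be a matroid with rank function r, and let P₁,...,P_k be a partition of E. Then every base B of M satisfies |B ∩ P_i| = r(P_i) for all i if and only if every circuit C of M is contained in some single part P_i. -/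
open Finset Matrix

namespace FinMatroid

variable {α : Type*} [Fintype α] [DecidableEq α] (M : FinMatroid α)

lemma exists_maximal {A S : Finset α} (hA : M.Indep A) (hAS : A ⊆ S) :
    ∃ B, A ⊆ B ∧ B ⊆ S ∧ M.Indep B ∧ ∀ Y, M.Indep Y → B ⊆ Y → Y ⊆ S → Y = B := by
  classical
  set T := S.powerset.filter (fun X => M.Indep X ∧ A ⊆ X) with hT
  have hTne : T.Nonempty := ⟨A, by simp [hT, Finset.mem_filter, Finset.mem_powerset, hAS, hA]⟩
  obtain ⟨B, hBmem, hBmax⟩ := T.exists_max_image Finset.card hTne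
  simp only [hT, Finset.mem_filter, Finset.mem_powerset] at hBmem
  refine ⟨B, hBmem.2.2, hBmem.1, hBmem.2.1, ?_⟩
  intro Y hY hBY hYS
  by_contra hne
  have hlt : B.card < Y.card :=
    Finset.card_lt_card (hBY.ssubset_of_ne (Ne.symm hne))
  have hYmem : Y ∈ T := by
    simp only [hT, Finset.mem_filter, Finset.mem_powerset]
    exact ⟨hYS, hY, hBmem.2.2.trans hBY⟩
  exact absurd (hBmax Y hYmem) (not_le.mpr hlt)

lemma card_le_of_maximal {A B S : Finset α} (hA : M.Indep A) (hAS : A ⊆ S)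
    (hB : M.Indep B) (hBS : B ⊆ S)
    (hmax : ∀ Y, M.Indep Y → B ⊆ Y → Y ⊆ S → Y = B) : A.card ≤ B.card := by
  by_contra h
  push_neg at h
  obtain ⟨e, heA, heB, hei⟩ := M.indep_exchange hB hA h
  have heq := hmax (insert e B) hei (Finset.subset_insert _ _)
    (Finset.insert_subset (hAS heA) hBS)
  exact heB (heq ▸ Finset.mem_insert_self e B)

lemma rank_eq_of_maximal {B S : Finset α} (hB : M.Indep B) (hBS : B ⊆ S)
    (hmax : ∀ Y, M.Indep Y → B ⊆ Y → Y ⊆ S → Y = B) : M.rank S = B.card := by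
  apply le_antisymm
  · apply Finset.sup_le
    intro A hA
    simp only [Finset.mem_filter, Finset.mem_powerset] at hA
    exact M.card_le_of_maximal hA.2 hA.1 hB hBS hmax
  · exact Finset.le_sup (by simp [Finset.mem_filter, Finset.mem_powerset, hBS, hB])

lemma exists_circuit_subset {S : Finset α} (hS : ¬ M.Indep S) :
    ∃ C, C ⊆ S ∧ M.IsCircuit C := by
  classical
  induction S using Finset.strongInduction with
  | _ S ih =>
    by_cases h : ∀ e ∈ S, M.Indep (S.erase e)
    · exact ⟨S, Finset.Subset.refl _, hS, h⟩
    · push_neg at h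
      obtain ⟨e, heS, hdep⟩ := h
      obtain ⟨C, hCsub, hC⟩ := ih (S.erase e) (Finset.erase_ssubset heS) hdep
      exact ⟨C, hCsub.trans (Finset.erase_subset _ _), hC⟩

lemma card_le_of_base {A B : Finset α} (hA : M.Indep A) (hB : M.IsBase B) :
    A.card ≤ B.card :=
  M.card_le_of_maximal hA (Finset.subset_univ _) hB.1 (Finset.subset_univ _)
    (fun Y hY hBY _ => hB.2 Y hY hBY)

lemma isBase_of_card_s10 {A B : Finset α} (hA : M.Indep A) (hB : M.IsBase B)
    (hcard : A.card = B.card) : M.IsBase A := by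
  refine ⟨hA, fun Y hY hAY => ?_⟩
  have hYA : Y.card ≤ A.card := hcard ▸ M.card_le_of_base hY hB
  exact (Finset.eq_of_subset_of_card_le hAY hYA).symm

lemma notMem_base_of_circuit {B C : Finset α} (hB : M.IsBase B) (hC : M.IsCircuit C)
    {e : α} (he : e ∈ C) (hCB : C.erase e ⊆ B) : e ∉ B := by
  intro heB
  apply hC.1
  apply M.indep_subset hB.1
  intro x hx
  rcases eq_or_ne x e with rfl | hne
  · exact heB
  · exact hCB (Finset.mem_erase.mpr ⟨hne, hx⟩)

lemma base_exchange {B C : Finset α} (hB : M.IsBase B) (hC : M.IsCircuit C)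
    {e f : α} (he : e ∈ C) (hf : f ∈ C) (hef : e ≠ f) (hCB : C.erase e ⊆ B) :
    M.IsBase (insert e (B.erase f)) := by
  classical
  have heB : e ∉ B := M.notMem_base_of_circuit hB hC he hCB
  have hfB : f ∈ B := hCB (Finset.mem_erase.mpr ⟨(Ne.symm hef), hf⟩)
  set D := insert e (B.erase f) with hD
  have heD : e ∉ B.erase f := fun h => heB (Finset.mem_of_mem_erase h)
  have hBpos : 1 ≤ B.card := by
    rcases Finset.eq_empty_or_nonempty B with rfl | h
    · exact absurd hfB (Finset.notMem_empty f)
    · exact Finset.card_pos.mpr h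
  have hcardD : D.card = B.card := by
    rw [hD, Finset.card_insert_of_notMem heD, Finset.card_erase_of_mem hfB]
    omega
  have hCfD : C.erase f ⊆ D := by
    intro x hx
    obtain ⟨hxf, hxC⟩ := Finset.mem_erase.mp hx
    rcases eq_or_ne x e with rfl | hxe
    · exact Finset.mem_insert_self _ _
    · exact Finset.mem_insert_of_mem
        (Finset.mem_erase.mpr ⟨hxf, hCB (Finset.mem_erase.mpr ⟨hxe, hxC⟩)⟩)
  have hDindep : M.Indep D := by
    by_contra hDdep
    obtain ⟨A, hCfA, hAD, hAindep, hAmax⟩ := M.exists_maximal (hC.2 f hf) hCfD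
    have hAcard_le : A.card ≤ B.card - 1 := by
      have hAne : A ≠ D := fun h => hDdep (h ▸ hAindep)
      have := Finset.card_lt_card (hAD.ssubset_of_ne hAne)
      omega
    have hAcard_ge : B.card - 1 ≤ A.card := by
      have hBf : B.erase f ⊆ D := Finset.subset_insert _ _
      have := M.card_le_of_maximal (M.indep_subset hB.1 (Finset.erase_subset f B))
        hBf hAindep hAD hAmax
      rw [Finset.card_erase_of_mem hfB] at this
      exact this
    have hAcard : A.card = B.card - 1 := le_antisymm hAcard_le hAcard_ge
    -- D \ A is a singleton
    have hDA : (D \ A).card = 1 := by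
      rw [Finset.card_sdiff_of_subset hAD, hcardD, hAcard]
      omega
    obtain ⟨g, hg⟩ := Finset.card_eq_one.mp hDA
    have hgD : g ∈ D := (Finset.mem_sdiff.mp (hg ▸ Finset.mem_singleton_self g)).1
    have hgA : g ∉ A := (Finset.mem_sdiff.mp (hg ▸ Finset.mem_singleton_self g)).2
    have hmemA : ∀ x, x ∈ D → x ≠ g → x ∈ A := by
      intro x hxD hxg
      by_contra hxA
      have : x ∈ D \ A := Finset.mem_sdiff.mpr ⟨hxD, hxA⟩
      rw [hg, Finset.mem_singleton] at this
      exact hxg this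
    have heA : e ∈ A := hCfA (Finset.mem_erase.mpr ⟨hef, he⟩)
    have hge : g ≠ e := fun h => hgA (h ▸ heA)
    -- exchange B into A
    have hAltB : A.card < B.card := by omega
    obtain ⟨x, hxB, hxA, hxind⟩ := M.indep_exchange hAindep hB.1 hAltB
    have hxfg : x = f ∨ x = g := by
      by_contra hcon
      push_neg at hcon
      apply hxA
      apply hmemA x _ hcon.2
      exact Finset.mem_insert_of_mem (Finset.mem_erase.mpr ⟨hcon.1, hxB⟩)
    rcases hxfg with hxf | hxg
    · -- insert f A ⊇ C, dependent
      subst hxf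
      apply hC.1
      apply M.indep_subset hxind
      intro y hy
      rcases eq_or_ne y x with rfl | hyf
      · exact Finset.mem_insert_self _ _
      · exact Finset.mem_insert_of_mem (hCfA (Finset.mem_erase.mpr ⟨hyf, hy⟩))
    · -- insert g A = D, dependent
      subst hxg
      apply hDdep
      have : insert x A = D := by
        apply Finset.Subset.antisymm
        · exact Finset.insert_subset hgD hAD
        · intro y hyD
          rcases eq_or_ne y x with rfl | hyg
          · exact Finset.mem_insert_self _ _
          · exact Finset.mem_insert_of_mem (hmemA y hyD hyg)
      rw [← this]
      exact hxind
  exact M.isBase_of_card_s10 hDindep hB (hcardD ▸ rfl)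

end FinMatroid

/-- for a partition `P₁,…,P_k` of the ground set, every base `B` satisfies
`|B ∩ Pᵢ| = r(Pᵢ)` for all `i` iff every circuit is contained in a single part. -/
theorem full_rank_intersection_iff_circuits_in_parts {α : Type*} [Fintype α] [DecidableEq α]
    (M : FinMatroid α)
    (k : ℕ) (P : Fin k → Finset α)
    (hpart : ∀ e : α, ∃! i : Fin k, e ∈ P i) :
    (∀ B : Finset α, M.IsBase B → ∀ i : Fin k, (B ∩ P i).card = M.rank (P i)) ↔
    (∀ C : Finset α, M.IsCircuit C → ∃ i : Fin k, C ⊆ P i) := by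
  constructor
  · -- forward direction
    intro h C hC
    by_contra hcon
    push_neg at hcon
    have hCne : C.Nonempty := by
      rcases Finset.eq_empty_or_nonempty C with rfl | h'
      · exact absurd M.indep_empty hC.1
      · exact h'
    obtain ⟨e, heC⟩ := hCne
    obtain ⟨i, hei, -⟩ := hpart e
    obtain ⟨f, hfC, hfPi⟩ := Finset.not_subset.mp (hcon i)
    have hef : e ≠ f := fun h' => hfPi (h' ▸ hei)
    -- extend C.erase e to a base B
    obtain ⟨B, hCB, -, hBindep, hBmax⟩ :=
      M.exists_maximal (hC.2 e heC) (Finset.subset_univ (C.erase e))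
    have hBbase : M.IsBase B :=
      ⟨hBindep, fun Y hY hBY => hBmax Y hY hBY (Finset.subset_univ _)⟩
    have heB : e ∉ B := M.notMem_base_of_circuit hBbase hC heC hCB
    have hDbase := M.base_exchange hBbase hC heC hfC hef hCB
    have h1 := h B hBbase i
    have h2 := h _ hDbase i
    -- compute (insert e (B.erase f)) ∩ P i = insert e (B ∩ P i)
    have hinter : (insert e (B.erase f)) ∩ P i = insert e (B ∩ P i) := by
      ext x
      simp only [Finset.mem_inter, Finset.mem_insert, Finset.mem_erase]
      constructor
      · rintro ⟨(rfl | ⟨hxf, hxB⟩), hxP⟩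
        · exact Or.inl rfl
        · exact Or.inr ⟨hxB, hxP⟩
      · rintro (rfl | ⟨hxB, hxP⟩)
        · exact ⟨Or.inl rfl, hei⟩
        · exact ⟨Or.inr ⟨fun h' => hfPi (h' ▸ hxP), hxB⟩, hxP⟩
    rw [hinter, Finset.card_insert_of_notMem
      (fun h' => heB (Finset.mem_inter.mp h').1), h1] at h2
    omega
  · -- backward direction
    intro h B hB i
    symm
    apply M.rank_eq_of_maximal (M.indep_subset hB.1 (Finset.inter_subset_left))
      (Finset.inter_subset_right)
    intro Y hY hBY hYP
    by_contra hne
    obtain ⟨x, hxY, hxBP⟩ := Finset.exists_of_ssubset (hBY.ssubset_of_ne (Ne.symm hne))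
    have hxP : x ∈ P i := hYP hxY
    have hxB : x ∉ B := fun h' => hxBP (Finset.mem_inter.mpr ⟨h', hxP⟩)
    have hdep : ¬ M.Indep (insert x B) := by
      intro hind
      have := hB.2 _ hind (Finset.subset_insert _ _)
      exact hxB (this ▸ Finset.mem_insert_self x B)
    obtain ⟨C, hCsub, hC⟩ := M.exists_circuit_subset hdep
    have hxC : x ∈ C := by
      by_contra hxC
      apply hC.1
      apply M.indep_subset hB.1
      intro y hy
      rcases Finset.mem_insert.mp (hCsub hy) with rfl | hyB
      · exact absurd hy hxC
      · exact hyB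
    obtain ⟨j, hCPj⟩ := h C hC
    obtain ⟨i', -, huniq⟩ := hpart x
    have hji : j = i := by
      have h1 := huniq j (hCPj hxC)
      have h2 := huniq i hxP
      rw [h1, h2]
    subst hji
    apply hC.1
    apply M.indep_subset hY
    intro y hyC
    rcases Finset.mem_insert.mp (hCsub hyC) with rfl | hyB
    · exact hxY
    · exact hBY (Finset.mem_inter.mpr ⟨hyB, hCPj hyC⟩)
end

section
/- Let G = (V, E) be a connected graph and consider the game where each player plays a spanning tree of G with loss matrix the identity (loss = |T₁ ∩ T₂| in expectation, i.e., x^T y on marginals). A point x in the spanning tree base polytope gives a symmetric Nash equilibrium (x, x) if and only if x is constant on each block (2-edge-connected/biconnected component) of G and each block is uniformly dense; equivalently, x(P_i) = r(P_i) for the level sets P_i of x, where r is the graphic matroid rank. -/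
open Finset

/-- Rank function of the graphic matroid: the maximum cardinality of an acyclic
subset of a given edge set. -/
noncomputable def graphicRank {V : Type*} [Fintype V] [DecidableEq V]
    (S : Finset (Sym2 V)) : ℕ :=
  (S.powerset.filter
    (fun T : Finset (Sym2 V) => (SimpleGraph.fromEdgeSet (↑T : Set (Sym2 V))).IsAcyclic)).sup Finset.card

/-- Membership in the spanning tree (graphic matroid base) polytope of `G`. -/
noncomputable def memSpanningTreePolytope {V : Type*} [Fintype V] [DecidableEq V]
    (G : SimpleGraph V) [DecidableRel G.Adj] (z : Sym2 V → ℝ) : Prop :=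
  (∀ e, 0 ≤ z e) ∧ (∀ e ∉ G.edgeFinset, z e = 0) ∧
    (∀ S ⊆ G.edgeFinset, ∑ e ∈ S, z e ≤ (graphicRank S : ℝ)) ∧
    (∑ e ∈ G.edgeFinset, z e = (graphicRank G.edgeFinset : ℝ))

set_option linter.unusedSectionVars false

namespace STG

variable {V : Type*} [Fintype V] [DecidableEq V]

def vvec (v : V) : V → ZMod 2 := fun w => if w = v then 1 else 0

def evec (e : Sym2 V) : V → ZMod 2 := fun v => if v ∈ e then 1 else 0

omit [Fintype V] [DecidableEq V] in
lemma self_add_self (g : V → ZMod 2) : g + g = 0 := by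
  funext w
  rw [Pi.add_apply]
  exact CharTwo.add_self_eq_zero _

omit [Fintype V] in
lemma evec_eq_add {u v : V} (h : u ≠ v) : evec s(u, v) = vvec u + vvec v := by
  funext w
  simp only [evec, vvec, Sym2.mem_iff, Pi.add_apply]
  by_cases hu : w = u <;> by_cases hv : w = v <;> simp_all

omit [Fintype V] in
lemma evec_injOn {e f : Sym2 V} (he : ¬ e.IsDiag) (hf : ¬ f.IsDiag)
    (h : evec e = evec f) : e = f := by
  induction e using Sym2.ind with | _ a b =>
  induction f using Sym2.ind with | _ c d =>
  rw [Sym2.mk_isDiag_iff] at he hf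
  have mem : ∀ w, w ∈ s(a,b) ↔ w ∈ s(c,d) := by
    intro w
    have := congrFun h w
    simp only [evec] at this
    by_cases h1 : w ∈ s(a,b) <;> by_cases h2 : w ∈ s(c,d) <;> simp_all
  have ha := (mem a).mp (Sym2.mem_mk_left a b)
  have hb := (mem b).mp (Sym2.mem_mk_right a b)
  rw [Sym2.mem_iff] at ha hb
  rw [Sym2.eq_iff]
  rcases ha with rfl | rfl
  · rcases hb with rfl | rfl
    · exact absurd rfl he
    · exact Or.inl ⟨rfl, rfl⟩
  · rcases hb with rfl | rfl
    · exact Or.inr ⟨rfl, rfl⟩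
    · exact absurd rfl he

omit [Fintype V] in
lemma walk_edges_sum {G' : SimpleGraph V} {u v : V} (p : G'.Walk u v) :
    (p.edges.map evec).sum = vvec u + vvec v := by
  induction p with
  | nil =>
    simp only [SimpleGraph.Walk.edges_nil, List.map_nil, List.sum_nil]
    exact (self_add_self _).symm
  | cons h p ih =>
    rename_i a b c
    simp only [SimpleGraph.Walk.edges_cons, List.map_cons, List.sum_cons, ih]
    rw [evec_eq_add h.ne]
    have : vvec b + vvec b = 0 := self_add_self _
    rw [add_assoc, ← add_assoc (vvec b), this, zero_add]


lemma linearIndependent_image {ι : Type*} {s : Set ι} {f : ι → (V → ZMod 2)}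
    (hf : Set.InjOn f s) : LinearIndependent (ZMod 2) (fun x : s => f x) ↔
      LinearIndependent (ZMod 2) (fun x : f '' s => (x : V → ZMod 2)) :=
  linearIndepOn_iff_image hf

/-- linear functional summing coordinates over a vertex set -/
noncomputable def indL (W : Set V) : (V → ZMod 2) →ₗ[ZMod 2] ZMod 2 where
  toFun φ := ∑ w ∈ Finset.univ.filter (· ∈ W), φ w
  map_add' φ ψ := by simp [Finset.sum_add_distrib]
  map_smul' c φ := by simp [Finset.mul_sum]

lemma indL_vvec (W : Set V) (v : V) : indL W (vvec v) = if v ∈ W then 1 else 0 := by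
  simp only [indL, vvec, LinearMap.coe_mk, AddHom.coe_mk]
  rw [Finset.sum_ite_eq' (Finset.univ.filter (· ∈ W)) v (fun _ => 1)]
  simp

lemma indep_acyclic {S : Finset (Sym2 V)} 
    (h : LinearIndependent (ZMod 2) (fun e : (S : Set (Sym2 V)) => evec (e : Sym2 V))) :
    (SimpleGraph.fromEdgeSet (↑S : Set (Sym2 V))).IsAcyclic := by
  intro v c hc
  have hedges : ∀ e ∈ c.edges, e ∈ S := by
    intro e he
    have := c.edges_subset_edgeSet he
    rw [SimpleGraph.edgeSet_fromEdgeSet] at this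
    exact this.1
  set T' : Finset (Sym2 V) := c.edges.toFinset with hT'
  have hT'S : T' ⊆ S := fun e he => hedges e (List.mem_toFinset.mp he)
  have hsum : ∑ e ∈ T', evec e = 0 := by
    have hnd : c.edges.Nodup := hc.edges_nodup
    have : ∑ e ∈ T', evec e = (c.edges.map evec).sum := by
      rw [Finset.sum_list_map_count]
      apply Finset.sum_congr rfl
      intro e he
      rw [List.count_eq_one_of_mem hnd (List.mem_toFinset.mp he), one_smul]
    rw [this, walk_edges_sum, self_add_self]
  have hne : T'.Nonempty := by
    have h3 := hc.three_le_length
    have : c.edges ≠ [] := by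
      intro h0
      have hlen := c.length_edges
      rw [h0] at hlen
      simp at hlen
      omega
    rcases List.exists_mem_of_ne_nil _ this with ⟨e, he⟩
    exact ⟨e, List.mem_toFinset.mpr he⟩
  rw [Fintype.linearIndependent_iff] at h
  obtain ⟨e₀, he₀⟩ := hne
  have := h (fun e => if ↑e ∈ T' then 1 else 0) ?_ ⟨e₀, hT'S he₀⟩
  · simp [he₀] at this
  · rw [Finset.sum_finset_coe (s := S) (f := fun e => (if e ∈ T' then (1:ZMod 2) else 0) • evec e)]
    simp only [ite_smul, one_smul, zero_smul]
    rw [← Finset.sum_filter]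
    rw [Finset.filter_mem_eq_inter, Finset.inter_eq_right.mpr hT'S]
    exact hsum


lemma acyclic_mono {G₁ G₂ : SimpleGraph V} (hle : G₁ ≤ G₂) (h : G₂.IsAcyclic) :
    G₁.IsAcyclic := by
  intro v c hc
  exact h (c.mapLe hle) (hc.mapLe hle)

lemma acyclic_indep : ∀ S : Finset (Sym2 V), (∀ e ∈ S, ¬ e.IsDiag) →
    (SimpleGraph.fromEdgeSet (↑S : Set (Sym2 V))).IsAcyclic →
    LinearIndependent (ZMod 2) (fun e : (S : Set (Sym2 V)) => evec (e : Sym2 V)) := by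
  intro S
  induction S using Finset.strongInduction with
  | _ S ih =>
    intro hS hac
    rcases S.eq_empty_or_nonempty with rfl | ⟨e, he⟩
    · have : IsEmpty ((↑(∅ : Finset (Sym2 V)) : Set (Sym2 V))) := by simp
      exact linearIndependent_empty_type
    · obtain ⟨u, w, rfl⟩ : ∃ u w, e = s(u, w) := Sym2.exists.mp ⟨e, rfl⟩
      have huw : u ≠ w := fun h => hS _ he (by rw [Sym2.mk_isDiag_iff]; exact h)
      set T₀ := S.erase s(u, w) with hT₀
      have hsub : (↑T₀ : Set (Sym2 V)) ⊆ ↑S := Finset.coe_subset.mpr (Finset.erase_subset _ _)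
      have hle : SimpleGraph.fromEdgeSet (↑T₀ : Set (Sym2 V)) ≤ SimpleGraph.fromEdgeSet ↑S :=
        SimpleGraph.fromEdgeSet_mono hsub
      have hac₀ := acyclic_mono hle hac
      have hS₀ : ∀ f ∈ T₀, ¬ f.IsDiag := fun f hf => hS f (Finset.erase_subset _ _ hf)
      have hind₀ := ih T₀ (Finset.erase_ssubset he) hS₀ hac₀
      -- u and w are not reachable in T₀
      have hnr : ¬ (SimpleGraph.fromEdgeSet (↑T₀ : Set (Sym2 V))).Reachable u w := by
        intro hr
        obtain ⟨p0⟩ := hr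
        set p := p0.toPath with hp
        have hpedges : ∀ f ∈ p.1.edges,
            f ∈ (SimpleGraph.fromEdgeSet (↑S : Set (Sym2 V))).edgeSet := by
          intro f hf
          have h1 := SimpleGraph.Walk.edges_subset_edgeSet _ hf
          rw [SimpleGraph.edgeSet_fromEdgeSet] at h1 ⊢
          exact ⟨hsub h1.1, h1.2⟩
        set q := SimpleGraph.Walk.transfer p.1 _ hpedges with hq
        have hqpath : q.IsPath := p.2.transfer hpedges
        have hadj : (SimpleGraph.fromEdgeSet (↑S : Set (Sym2 V))).Adj u w := by
          rw [SimpleGraph.fromEdgeSet_adj]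
          exact ⟨he, huw⟩
        have hppath : (SimpleGraph.Walk.cons hadj SimpleGraph.Walk.nil).IsPath := by
          simp [SimpleGraph.Walk.isPath_iff_eq_nil, huw]
        have := hac.path_unique ⟨q, hqpath⟩ ⟨SimpleGraph.Walk.cons hadj SimpleGraph.Walk.nil, hppath⟩
        have hedgeq : s(u, w) ∈ q.edges := by
          have hwalks : q = SimpleGraph.Walk.cons hadj SimpleGraph.Walk.nil :=
            congrArg Subtype.val this
          rw [hwalks]
          simp
        rw [SimpleGraph.Walk.edges_transfer] at hedgeq
        have := SimpleGraph.Walk.edges_subset_edgeSet _ hedgeq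
        rw [SimpleGraph.edgeSet_fromEdgeSet] at this
        exact (Finset.notMem_erase _ _) (by exact_mod_cast this.1)
      -- the span functional
      have hspan : evec s(u, w) ∉ Submodule.span (ZMod 2) (evec '' (↑T₀ : Set (Sym2 V))) := by
        intro hmem
        set W : Set V := {z | (SimpleGraph.fromEdgeSet (↑T₀ : Set (Sym2 V))).Reachable u z} with hW
        have hL0 : ∀ φ ∈ Submodule.span (ZMod 2) (evec '' (↑T₀ : Set (Sym2 V))), indL W φ = 0 := by
          intro φ hφ
          induction hφ using Submodule.span_induction with
          | mem ψ hψ =>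
            obtain ⟨f, hf, rfl⟩ := hψ
            have hf' : f ∈ T₀ := by exact_mod_cast hf
            obtain ⟨a, b, rfl⟩ : ∃ a b, f = s(a, b) := Sym2.exists.mp ⟨f, rfl⟩
            have hab : a ≠ b := fun h => hS₀ _ hf' (by rw [Sym2.mk_isDiag_iff]; exact h)
            have hadj : (SimpleGraph.fromEdgeSet (↑T₀ : Set (Sym2 V))).Adj a b := by
              rw [SimpleGraph.fromEdgeSet_adj]
              exact ⟨by exact_mod_cast hf', hab⟩
            have hiff : a ∈ W ↔ b ∈ W := by
              constructor
              · intro ha; exact ha.trans hadj.reachable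
              · intro hb; exact hb.trans hadj.symm.reachable
            rw [evec_eq_add hab, map_add, indL_vvec, indL_vvec]
            by_cases haW : a ∈ W
            · have hbW : b ∈ W := hiff.mp haW
              simp [haW, hbW]
              decide
            · have hbW : b ∉ W := fun hb => haW (hiff.mpr hb)
              simp [haW, hbW]
          | zero => simp
          | add ψ χ _ _ h1 h2 => rw [map_add, h1, h2, add_zero]
          | smul c ψ _ h1 => rw [map_smul, h1, smul_zero]
        have h1 := hL0 _ hmem
        rw [evec_eq_add huw, map_add, indL_vvec, indL_vvec] at h1
        have huW : u ∈ W := SimpleGraph.Reachable.refl u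
        have hwW : w ∉ W := hnr
        simp [huW, hwW] at h1
      -- conclude
      have hset : evec '' (↑S : Set (Sym2 V)) =
          insert (evec s(u, w)) (evec '' (↑T₀ : Set (Sym2 V))) := by
        rw [hT₀, ← Set.image_insert_eq]
        congr 1
        rw [← Finset.coe_insert, Finset.insert_erase he]
      have hindset : LinearIndependent (ZMod 2)
          (fun x : (evec '' (↑T₀ : Set (Sym2 V))) => (x : V → ZMod 2)) := by
        rw [← linearIndependent_image ?_]
        · exact hind₀
        · intro a ha b hb hab
          exact evec_injOn (hS₀ a (by exact_mod_cast ha)) (hS₀ b (by exact_mod_cast hb)) hab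
      have hins := LinearIndepOn.id_insert hindset hspan
      rw [linearIndependent_image ?_]
      · rw [hset]; exact hins
      · intro a ha b hb hab
        exact evec_injOn (hS a (by exact_mod_cast ha)) (hS b (by exact_mod_cast hb)) hab

/-- the span of the incidence vectors of a finite edge set -/
noncomputable def spanE (S : Finset (Sym2 V)) : Submodule (ZMod 2) (V → ZMod 2) :=
  Submodule.span (ZMod 2) (evec '' (↑S : Set (Sym2 V)))

lemma card_le_rank {T S : Finset (Sym2 V)} (hT : T ⊆ S)
    (hac : (SimpleGraph.fromEdgeSet (↑T : Set (Sym2 V))).IsAcyclic) :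
    T.card ≤ graphicRank S :=
  Finset.le_sup (Finset.mem_filter.mpr ⟨Finset.mem_powerset.mpr hT, hac⟩)

lemma rank_empty : graphicRank (∅ : Finset (Sym2 V)) = 0 := by
  apply Nat.le_antisymm _ (Nat.zero_le _)
  apply Finset.sup_le
  intro T hT
  rw [Finset.mem_filter, Finset.mem_powerset, Finset.subset_empty] at hT
  simp [hT.1]

lemma indep_on_image {T : Finset (Sym2 V)} (hT : ∀ e ∈ T, ¬ e.IsDiag)
    (hac : (SimpleGraph.fromEdgeSet (↑T : Set (Sym2 V))).IsAcyclic) :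
    LinearIndependent (ZMod 2) ((↑) : ↑(↑(T.image evec) : Set (V → ZMod 2)) → (V → ZMod 2)) := by
  have h1 := acyclic_indep T hT hac
  have hinj : Set.InjOn evec (↑T : Set (Sym2 V)) := fun a ha b hb hab =>
    evec_injOn (hT a (by exact_mod_cast ha)) (hT b (by exact_mod_cast hb)) hab
  have h2 := (linearIndependent_image hinj).mp h1
  have : (↑(T.image evec) : Set (V → ZMod 2)) = evec '' (↑T : Set (Sym2 V)) := by
    simp [Finset.coe_image]
  rw [this]
  exact h2

lemma card_eq_finrank {T : Finset (Sym2 V)} (hT : ∀ e ∈ T, ¬ e.IsDiag)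
    (hac : (SimpleGraph.fromEdgeSet (↑T : Set (Sym2 V))).IsAcyclic) :
    T.card = Module.finrank (ZMod 2) (spanE T) := by
  have hinj : Set.InjOn evec (↑T : Set (Sym2 V)) := fun a ha b hb hab =>
    evec_injOn (hT a (by exact_mod_cast ha)) (hT b (by exact_mod_cast hb)) hab
  have h3 := finrank_span_finset_eq_card (indep_on_image hT hac)
  have himg : (↑(T.image evec) : Set (V → ZMod 2)) = evec '' (↑T : Set (Sym2 V)) := by
    simp [Finset.coe_image]
  rw [himg] at h3
  rw [spanE, h3]
  exact (Finset.card_image_of_injOn hinj).symm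

lemma rank_eq_finrank {S : Finset (Sym2 V)} (hS : ∀ e ∈ S, ¬ e.IsDiag) :
    graphicRank S = Module.finrank (ZMod 2) (spanE S) := by
  apply Nat.le_antisymm
  · apply Finset.sup_le
    intro T hT
    rw [Finset.mem_filter, Finset.mem_powerset] at hT
    obtain ⟨hTS, hac⟩ := hT
    have hT' : ∀ e ∈ T, ¬ e.IsDiag := fun e he => hS e (hTS he)
    rw [card_eq_finrank hT' hac]
    exact Submodule.finrank_mono (Submodule.span_mono (Set.image_mono (by exact_mod_cast hTS)))
  · obtain ⟨b, hb1, hb2, hb3⟩ := exists_linearIndependent (ZMod 2) (evec '' (↑S : Set (Sym2 V)))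
    set T : Finset (Sym2 V) := S.filter (fun e => evec e ∈ b) with hT
    have hTS : T ⊆ S := Finset.filter_subset _ _
    have hT' : ∀ e ∈ T, ¬ e.IsDiag := fun e he => hS e (hTS he)
    have himg : evec '' (↑T : Set (Sym2 V)) = b := by
      apply Set.Subset.antisymm
      · rintro φ ⟨e, he, rfl⟩
        have := (Finset.mem_filter.mp (by exact_mod_cast he)).2
        exact this
      · intro φ hφ
        obtain ⟨e, he, rfl⟩ := hb1 hφ
        have heT : e ∈ T := Finset.mem_filter.mpr ⟨by exact_mod_cast he, hφ⟩
        exact ⟨e, by exact_mod_cast heT, rfl⟩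
    have hac : (SimpleGraph.fromEdgeSet (↑T : Set (Sym2 V))).IsAcyclic := by
      apply indep_acyclic
      rw [linearIndependent_image (fun a ha b' hb' hab =>
        evec_injOn (hT' a (by exact_mod_cast ha)) (hT' b' (by exact_mod_cast hb')) hab)]
      rw [himg]
      exact hb3
    have hcard : T.card = Module.finrank (ZMod 2) (spanE S) := by
      rw [card_eq_finrank hT' hac, spanE, himg, hb2, spanE]
    rw [← hcard]
    exact card_le_rank hTS hac

lemma rank_submodular {A B : Finset (Sym2 V)} (hA : ∀ e ∈ A, ¬ e.IsDiag)
    (hB : ∀ e ∈ B, ¬ e.IsDiag) :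
    graphicRank (A ∪ B) + graphicRank (A ∩ B) ≤ graphicRank A + graphicRank B := by
  have hAB : ∀ e ∈ A ∪ B, ¬ e.IsDiag := by
    intro e he; rcases Finset.mem_union.mp he with h | h; exacts [hA e h, hB e h]
  have hI : ∀ e ∈ A ∩ B, ¬ e.IsDiag := fun e he => hA e (Finset.mem_inter.mp he).1
  rw [rank_eq_finrank hA, rank_eq_finrank hB, rank_eq_finrank hAB, rank_eq_finrank hI]
  have hsup : spanE (A ∪ B) = spanE A ⊔ spanE B := by
    rw [spanE, spanE, spanE, ← Submodule.span_union, ← Set.image_union, ← Finset.coe_union]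
  have hinf : spanE (A ∩ B) ≤ spanE A ⊓ spanE B := by
    apply le_inf
    · exact Submodule.span_mono (Set.image_mono (by exact_mod_cast Finset.inter_subset_left))
    · exact Submodule.span_mono (Set.image_mono (by exact_mod_cast Finset.inter_subset_right))
  calc Module.finrank (ZMod 2) (spanE (A ∪ B)) + Module.finrank (ZMod 2) (spanE (A ∩ B))
      ≤ Module.finrank (ZMod 2) ↑(spanE A ⊔ spanE B) + Module.finrank (ZMod 2) ↑(spanE A ⊓ spanE B) := by
        apply Nat.add_le_add
        · rw [hsup]
        · exact Submodule.finrank_mono hinf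
    _ = Module.finrank (ZMod 2) (spanE A) + Module.finrank (ZMod 2) (spanE B) :=
        Submodule.finrank_sup_add_finrank_inf_eq _ _

/-- extension lemma: any acyclic subset extends to a maximum one -/
lemma exists_extension {S : Finset (Sym2 V)} (hS : ∀ e ∈ S, ¬ e.IsDiag) :
    ∀ (n : ℕ) (I : Finset (Sym2 V)), I ⊆ S →
    (SimpleGraph.fromEdgeSet (↑I : Set (Sym2 V))).IsAcyclic →
    graphicRank S - I.card ≤ n →
    ∃ T, I ⊆ T ∧ T ⊆ S ∧ (SimpleGraph.fromEdgeSet (↑T : Set (Sym2 V))).IsAcyclic ∧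
      T.card = graphicRank S := by
  intro n
  induction n with
  | zero =>
    intro I hIS hac hn
    refine ⟨I, Finset.Subset.refl I, hIS, hac, ?_⟩
    have h1 := card_le_rank hIS hac
    omega
  | succ n ih =>
    intro I hIS hac hn
    by_cases heq : I.card = graphicRank S
    · exact ⟨I, Finset.Subset.refl I, hIS, hac, heq⟩
    · have hI' : ∀ e ∈ I, ¬ e.IsDiag := fun e he => hS e (hIS he)
      have hlt : I.card < graphicRank S := lt_of_le_of_ne (card_le_rank hIS hac) heq
      -- find e ∈ S with evec e ∉ spanE I
      have hex : ∃ e ∈ S, evec e ∉ spanE I := by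
        by_contra hcon
        push_neg at hcon
        have hle : spanE S ≤ spanE I := by
          rw [spanE, Submodule.span_le]
          rintro φ ⟨e, he, rfl⟩
          exact hcon e (by exact_mod_cast he)
        have := Submodule.finrank_mono hle
        rw [← rank_eq_finrank hS, ← card_eq_finrank hI' hac] at this
        omega
      obtain ⟨e, heS, hespan⟩ := hex
      have heI : e ∉ I := fun h => hespan (Submodule.subset_span ⟨e, by exact_mod_cast h, rfl⟩)
      have hIe : ∀ f ∈ insert e I, ¬ f.IsDiag := by
        intro f hf
        rcases Finset.mem_insert.mp hf with rfl | h
        exacts [hS f heS, hI' f h]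
      have hacins : (SimpleGraph.fromEdgeSet (↑(insert e I) : Set (Sym2 V))).IsAcyclic := by
        apply indep_acyclic
        have hinj : Set.InjOn evec (↑I : Set (Sym2 V)) := fun a ha b hb hab =>
          evec_injOn (hI' a (by exact_mod_cast ha)) (hI' b (by exact_mod_cast hb)) hab
        have h1 := (linearIndependent_image hinj).mp (acyclic_indep I hI' hac)
        have h2 := LinearIndepOn.id_insert (x := evec e) h1 hespan
        rw [linearIndependent_image (fun a ha b hb hab =>
          evec_injOn (hIe a (by exact_mod_cast ha)) (hIe b (by exact_mod_cast hb)) hab)]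
        have : evec '' (↑(insert e I) : Set (Sym2 V)) =
            insert (evec e) (evec '' (↑I : Set (Sym2 V))) := by
          rw [Finset.coe_insert, Set.image_insert_eq]
        rw [this]
        exact h2
      obtain ⟨T, hT1, hT2, hT3, hT4⟩ := ih (insert e I)
        (Finset.insert_subset heS hIS) hacins
        (by rw [Finset.card_insert_of_notMem heI]; omega)
      exact ⟨T, (Finset.subset_insert e I).trans hT1, hT2, hT3, hT4⟩

/-- greedy construction along level sets of w -/
lemma exists_greedy (w : Sym2 V → ℝ) :
    ∀ (C : Finset ℝ) (E₀ : Finset (Sym2 V)), (∀ e ∈ E₀, ¬ e.IsDiag) →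
    ∃ T, T ⊆ E₀ ∧ (SimpleGraph.fromEdgeSet (↑T : Set (Sym2 V))).IsAcyclic ∧
      T.card = graphicRank E₀ ∧
      ∀ c ∈ C, (T ∩ E₀.filter (fun e => c ≤ w e)).card
        = graphicRank (E₀.filter (fun e => c ≤ w e)) := by
  intro C
  induction C using Finset.strongInduction with
  | _ C ih =>
    intro E₀ hE₀
    rcases C.eq_empty_or_nonempty with rfl | hne
    · obtain ⟨T, _, hT2, hT3, hT4⟩ := exists_extension hE₀ (graphicRank E₀) ∅
        (Finset.empty_subset _)
        (by rw [Finset.coe_empty, SimpleGraph.fromEdgeSet_empty]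
            intro v c hc
            cases c with
            | nil => exact hc.ne_nil rfl
            | cons h p => simp at h)
        (by simp)
      exact ⟨T, hT2, hT3, hT4, by simp⟩
    · set c₀ := C.min' hne with hc₀
      set E' := E₀.filter (fun e => c₀ ≤ w e) with hE'
      have hE'diag : ∀ e ∈ E', ¬ e.IsDiag := fun e he => hE₀ e (Finset.filter_subset _ _ he)
      obtain ⟨T', hT'1, hT'2, hT'3, hT'4⟩ := ih (C.erase c₀) (Finset.erase_ssubset (C.min'_mem hne)) E' hE'diag
      obtain ⟨T, hT1, hT2, hT3, hT4⟩ := exists_extension hE₀ (graphicRank E₀) T'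
        (hT'1.trans (Finset.filter_subset _ _)) hT'2 (by omega)
      refine ⟨T, hT2, hT3, hT4, ?_⟩
      intro c hc
      have hsub : T ∩ E₀.filter (fun e => c ≤ w e) ⊆ E₀.filter (fun e => c ≤ w e) :=
        Finset.inter_subset_right
      have hacsub : (SimpleGraph.fromEdgeSet (↑(T ∩ E₀.filter (fun e => c ≤ w e)) : Set (Sym2 V))).IsAcyclic :=
        acyclic_mono (SimpleGraph.fromEdgeSet_mono (by exact_mod_cast Finset.inter_subset_left)) hT3
      have hub := card_le_rank hsub hacsub
      by_cases hcc : c = c₀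
      · have hEc : E₀.filter (fun e => c ≤ w e) = E' := by rw [hE', hcc]
        have hlb : T' ⊆ T ∩ E₀.filter (fun e => c ≤ w e) := by
          intro f hf
          refine Finset.mem_inter.mpr ⟨hT1 hf, ?_⟩
          rw [hEc]
          exact hT'1 hf
        have h6 := Finset.card_le_card hlb
        rw [hEc] at h6 hub ⊢
        omega
      · have hcC : c ∈ C.erase c₀ := Finset.mem_erase.mpr ⟨hcc, hc⟩
        have hc₀c : c₀ ≤ c := C.min'_le c hc
        have hfilt : E'.filter (fun e => c ≤ w e) = E₀.filter (fun e => c ≤ w e) := by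
          rw [hE', Finset.filter_filter]
          apply Finset.filter_congr
          intro e _
          constructor
          · intro h; exact h.2
          · intro h; exact ⟨le_trans hc₀c h, h⟩
        have h4 := hT'4 c hcC
        rw [hfilt] at h4
        have hlb : T' ∩ E₀.filter (fun e => c ≤ w e) ⊆ T ∩ E₀.filter (fun e => c ≤ w e) :=
          Finset.inter_subset_inter hT1 (Finset.Subset.refl _)
        have h5 : T' ∩ E'.filter (fun e => c ≤ w e) = T' ∩ E₀.filter (fun e => c ≤ w e) := by
          rw [hfilt]
        have h6 := Finset.card_le_card hlb
        omega


/-- gap to the previous value in C -/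
noncomputable def dlt (C : Finset ℝ) (c : ℝ) : ℝ := c - ((C.filter (· < c)).max.unbotD 0)

lemma dlt_nonneg {C : Finset ℝ} (hC : ∀ a ∈ C, 0 ≤ a) {c : ℝ} (hc : c ∈ C) : 0 ≤ dlt C c := by
  rw [dlt]
  rcases (C.filter (· < c)).eq_empty_or_nonempty with hemp | hne
  · rw [hemp]
    simp
    exact hC c hc
  · have hmax := Finset.max'_mem _ hne
    rw [Finset.mem_filter] at hmax
    rw [← Finset.coe_max' hne, WithBot.unbotD_coe]
    linarith [hmax.2]

lemma dlt_eq_zero {C : Finset ℝ} (hC : ∀ a ∈ C, 0 ≤ a) {c : ℝ} (hc : c ∈ C)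
    (h : dlt C c = 0) : c = 0 ∧ ∀ a ∈ C, c ≤ a := by
  rw [dlt] at h
  rcases (C.filter (· < c)).eq_empty_or_nonempty with hemp | hne
  · rw [hemp] at h
    simp at h
    refine ⟨h, ?_⟩
    intro a ha
    by_contra hlt
    push_neg at hlt
    have : a ∈ C.filter (· < c) := Finset.mem_filter.mpr ⟨ha, hlt⟩
    rw [hemp] at this
    simp at this
  · exfalso
    have hmax := Finset.max'_mem _ hne
    rw [Finset.mem_filter] at hmax
    rw [← Finset.coe_max' hne, WithBot.unbotD_coe] at h
    linarith [hmax.2]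

lemma dlt_sum (C : Finset ℝ) :
    ∀ (n : ℕ) (m : ℝ), m ∈ C → (C.filter (· < m)).card ≤ n →
    ∑ c ∈ C.filter (· ≤ m), dlt C c = m := by
  intro n
  induction n with
  | zero =>
    intro m hm hcard
    have hemp : C.filter (· < m) = ∅ := Finset.card_eq_zero.mp (Nat.le_zero.mp hcard)
    have : C.filter (· ≤ m) = {m} := by
      apply Finset.Subset.antisymm
      · intro a ha
        rw [Finset.mem_filter] at ha
        rcases lt_or_eq_of_le ha.2 with hlt | heq
        · exfalso
          have : a ∈ C.filter (· < m) := Finset.mem_filter.mpr ⟨ha.1, hlt⟩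
          rw [hemp] at this
          simp at this
        · simp [heq]
      · intro a ha
        rw [Finset.mem_singleton] at ha
        subst ha
        exact Finset.mem_filter.mpr ⟨hm, le_refl _⟩
    rw [this, Finset.sum_singleton, dlt, hemp]
    simp
  | succ n ih =>
    intro m hm hcard
    rcases (C.filter (· < m)).eq_empty_or_nonempty with hemp | hne
    · have : C.filter (· ≤ m) = {m} := by
        apply Finset.Subset.antisymm
        · intro a ha
          rw [Finset.mem_filter] at ha
          rcases lt_or_eq_of_le ha.2 with hlt | heq
          · exfalso
            have : a ∈ C.filter (· < m) := Finset.mem_filter.mpr ⟨ha.1, hlt⟩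
            rw [hemp] at this
            simp at this
          · simp [heq]
        · intro a ha
          rw [Finset.mem_singleton] at ha
          subst ha
          exact Finset.mem_filter.mpr ⟨hm, le_refl _⟩
      rw [this, Finset.sum_singleton, dlt, hemp]
      simp
    · set m' := (C.filter (· < m)).max' hne with hm'
      have hmem := Finset.max'_mem _ hne
      rw [Finset.mem_filter] at hmem
      obtain ⟨hm'C, hm'lt⟩ := hmem
      have hmaxprop : ∀ a ∈ C, a < m → a ≤ m' := fun a ha hlt =>
        Finset.le_max' (C.filter (· < m)) a (Finset.mem_filter.mpr ⟨ha, hlt⟩)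
      have hsplit : C.filter (· ≤ m) = insert m (C.filter (· ≤ m')) := by
        apply Finset.Subset.antisymm
        · intro a ha
          rw [Finset.mem_filter] at ha
          rcases lt_or_eq_of_le ha.2 with hlt | heq
          · exact Finset.mem_insert.mpr (Or.inr (Finset.mem_filter.mpr
              ⟨ha.1, hmaxprop a ha.1 hlt⟩))
          · subst heq
            exact Finset.mem_insert_self _ _
        · intro a ha
          rcases Finset.mem_insert.mp ha with rfl | h
          · exact Finset.mem_filter.mpr ⟨hm, le_refl _⟩
          · rw [Finset.mem_filter] at h
            exact Finset.mem_filter.mpr ⟨h.1, le_trans h.2 (le_of_lt hm'lt)⟩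
      have hmnot : m ∉ C.filter (· ≤ m') := by
        rw [Finset.mem_filter]
        rintro ⟨_, h⟩
        linarith
      rw [hsplit, Finset.sum_insert hmnot]
      have hfiltersub : C.filter (· < m') ⊆ (C.filter (· < m)).erase m' := by
        intro a ha
        rw [Finset.mem_filter] at ha
        refine Finset.mem_erase.mpr ⟨ne_of_lt ha.2, Finset.mem_filter.mpr ⟨ha.1, lt_trans ha.2 hm'lt⟩⟩
      have hcard' : (C.filter (· < m')).card ≤ n := by
        have h1 := Finset.card_le_card hfiltersub
        have h2 := Finset.card_erase_lt_of_mem (s := C.filter (· < m)) (Finset.mem_filter.mpr ⟨hm'C, hm'lt⟩)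
        rw [← hm'] at h2
        omega
      rw [ih m' hm'C hcard']
      have : dlt C m = m - m' := by
        rw [dlt, ← Finset.coe_max' hne, WithBot.unbotD_coe]
      rw [this]
      ring

/-- the layer-cake decomposition of a weighted sum -/
lemma layer {V : Type*} [Fintype V] [DecidableEq V] (E : Finset (Sym2 V))
    (w : Sym2 V → ℝ) (y : Sym2 V → ℝ) :
    ∑ e ∈ E, w e * y e =
      ∑ c ∈ E.image w, dlt (E.image w) c * ∑ e ∈ E.filter (fun e => c ≤ w e), y e := by
  set C := E.image w with hC
  have : ∀ c ∈ C, dlt C c * ∑ e ∈ E.filter (fun e => c ≤ w e), y e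
      = ∑ e ∈ E, (if c ≤ w e then dlt C c * y e else 0) := by
    intro c _
    rw [Finset.mul_sum, Finset.sum_filter]
  rw [Finset.sum_congr rfl this, Finset.sum_comm]
  apply Finset.sum_congr rfl
  intro e he
  have hwe : w e ∈ C := Finset.mem_image_of_mem w he
  have : ∑ c ∈ C, (if c ≤ w e then dlt C c * y e else 0)
      = (∑ c ∈ C.filter (· ≤ w e), dlt C c) * y e := by
    rw [Finset.sum_filter, Finset.sum_mul]
    apply Finset.sum_congr rfl
    intro c _
    split
    · rfl
    · rw [zero_mul]
  rw [this, dlt_sum C (C.filter (· < w e)).card (w e) hwe (le_refl _)]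


/-- indicator vectors of spanning forests belong to the polytope -/
lemma indicator_mem (G : SimpleGraph V) [DecidableRel G.Adj] {T : Finset (Sym2 V)}
    (hT : T ⊆ G.edgeFinset) (hac : (SimpleGraph.fromEdgeSet (↑T : Set (Sym2 V))).IsAcyclic)
    (hcard : T.card = graphicRank G.edgeFinset) :
    memSpanningTreePolytope G (fun e => if e ∈ T then (1:ℝ) else 0) := by
  have hsum : ∀ S : Finset (Sym2 V), ∑ e ∈ S, (if e ∈ T then (1:ℝ) else 0) = ((S ∩ T).card : ℝ) := by
    intro S
    rw [Finset.sum_boole, Finset.filter_mem_eq_inter]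
  refine ⟨fun e => by dsimp only; split <;> norm_num, fun e he => by
    dsimp only; rw [if_neg (fun h => he (hT h))], ?_, ?_⟩
  · intro S hS
    rw [hsum S]
    have h1 : S ∩ T ⊆ S := Finset.inter_subset_left
    have h2 : (SimpleGraph.fromEdgeSet (↑(S ∩ T) : Set (Sym2 V))).IsAcyclic :=
      acyclic_mono (SimpleGraph.fromEdgeSet_mono (by exact_mod_cast Finset.inter_subset_right)) hac
    exact_mod_cast card_le_rank h1 h2
  · rw [hsum, Finset.inter_eq_right.mpr hT, hcard]

/-- the key equality for level sets of any weight function -/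
lemma maxeq (G : SimpleGraph V) [DecidableRel G.Adj] (x w : Sym2 V → ℝ)
    (hx : memSpanningTreePolytope G x)
    (hw0 : ∀ e ∈ G.edgeFinset, 0 ≤ w e)
    (hkey : ∀ y, memSpanningTreePolytope G y →
      ∑ e ∈ G.edgeFinset, w e * y e = ∑ e ∈ G.edgeFinset, w e * x e) :
    ∀ c ∈ G.edgeFinset.image w,
      ∑ e ∈ G.edgeFinset.filter (fun e => c ≤ w e), x e
        = (graphicRank (G.edgeFinset.filter (fun e => c ≤ w e)) : ℝ) := by
  set E := G.edgeFinset with hE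
  have hdiag : ∀ e ∈ E, ¬ e.IsDiag := fun e he => G.not_isDiag_of_mem_edgeFinset he
  set C := E.image w with hC
  have hC0 : ∀ a ∈ C, 0 ≤ a := by
    rintro a ha
    obtain ⟨e, he, rfl⟩ := Finset.mem_image.mp ha
    exact hw0 e he
  obtain ⟨T, hT1, hT2, hT3, hT4⟩ := exists_greedy w C E hdiag
  have hyT := indicator_mem G hT1 hT2 hT3
  have hkeyT := hkey _ hyT
  rw [layer E w (fun e => if e ∈ T then (1:ℝ) else 0), layer E w x] at hkeyT
  have hYT : ∀ c ∈ C, ∑ e ∈ E.filter (fun e => c ≤ w e), (if e ∈ T then (1:ℝ) else 0)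
      = (graphicRank (E.filter (fun e => c ≤ w e)) : ℝ) := by
    intro c hc
    rw [Finset.sum_boole, Finset.filter_mem_eq_inter]
    rw [Finset.inter_comm]
    exact_mod_cast congrArg (Nat.cast : ℕ → ℝ) (hT4 c hc)
  have hXle : ∀ c ∈ C, ∑ e ∈ E.filter (fun e => c ≤ w e), x e
      ≤ (graphicRank (E.filter (fun e => c ≤ w e)) : ℝ) := by
    intro c _
    exact hx.2.2.1 _ (Finset.filter_subset _ _)
  have hzero : ∑ c ∈ C, dlt C c * ((graphicRank (E.filter (fun e => c ≤ w e)) : ℝ)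
      - ∑ e ∈ E.filter (fun e => c ≤ w e), x e) = 0 := by
    have : ∀ c ∈ C, dlt C c * ((graphicRank (E.filter (fun e => c ≤ w e)) : ℝ)
        - ∑ e ∈ E.filter (fun e => c ≤ w e), x e)
        = dlt C c * ∑ e ∈ E.filter (fun e => c ≤ w e), (if e ∈ T then (1:ℝ) else 0)
          - dlt C c * ∑ e ∈ E.filter (fun e => c ≤ w e), x e := by
      intro c hc
      rw [hYT c hc]
      ring
    rw [Finset.sum_congr rfl this, Finset.sum_sub_distrib, hkeyT, sub_self]
  have hterm : ∀ c ∈ C, dlt C c * ((graphicRank (E.filter (fun e => c ≤ w e)) : ℝ)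
      - ∑ e ∈ E.filter (fun e => c ≤ w e), x e) = 0 := by
    rw [← Finset.sum_eq_zero_iff_of_nonneg]
    · exact hzero
    · intro c hc
      have h1 := dlt_nonneg hC0 hc
      have h2 := hXle c hc
      have : (0:ℝ) ≤ (graphicRank (E.filter (fun e => c ≤ w e)) : ℝ)
          - ∑ e ∈ E.filter (fun e => c ≤ w e), x e := by linarith
      exact mul_nonneg h1 this
  intro c hc
  rcases mul_eq_zero.mp (hterm c hc) with hd0 | hsub
  · obtain ⟨hc0, hcmin⟩ := dlt_eq_zero hC0 hc hd0
    subst hc0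
    have hfull : E.filter (fun e => (0:ℝ) ≤ w e) = E := by
      apply Finset.filter_true_of_mem
      intro e he
      exact hw0 e he
    rw [hfull]
    exact hx.2.2.2
  · have h2 := hXle c hc
    linarith [sub_eq_zero.mp hsub]


end STG

/-- in the spanning tree game on a connected graph `G` with identity loss
matrix, a point `x` of the spanning tree polytope yields a symmetric Nash equilibrium
`(x,x)` if and only if for every level set `P_c = {e : x(e) = c}` of `x` one has
`x(P_c) = r(P_c)` (equivalently, `x` is constant on each block of `G` and every block
is uniformly dense). -/
theorem spanning_tree_symmetric_nash_iff {V : Type*} [Fintype V] [DecidableEq V]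
    (G : SimpleGraph V) [DecidableRel G.Adj] (hG : G.Connected)
    (x : Sym2 V → ℝ) (hx : memSpanningTreePolytope G x) :
    ((∀ y : Sym2 V → ℝ, memSpanningTreePolytope G y →
        ∑ e ∈ G.edgeFinset, x e * y e ≤ ∑ e ∈ G.edgeFinset, x e * x e) ∧
     (∀ z : Sym2 V → ℝ, memSpanningTreePolytope G z →
        ∑ e ∈ G.edgeFinset, x e * x e ≤ ∑ e ∈ G.edgeFinset, z e * x e)) ↔
    (∀ c : ℝ, ∑ e ∈ G.edgeFinset.filter (fun e => x e = c), x e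
        = (graphicRank (G.edgeFinset.filter (fun e => x e = c)) : ℝ)) := by
  classical
  set E := G.edgeFinset with hE
  have hdiag : ∀ e ∈ E, ¬ e.IsDiag := fun e he => G.not_isDiag_of_mem_edgeFinset he
  constructor
  · rintro ⟨h1, h2⟩
    have key : ∀ y, memSpanningTreePolytope G y →
        ∑ e ∈ E, x e * y e = ∑ e ∈ E, x e * x e := by
      intro y hy
      have hle := h1 y hy
      have hge := h2 y hy
      have : ∑ e ∈ E, y e * x e = ∑ e ∈ E, x e * y e :=
        Finset.sum_congr rfl fun e _ => mul_comm _ _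
      linarith
    -- upper level sets
    have stepA := STG.maxeq G x x hx (fun e _ => hx.1 e) key
    -- lower level sets
    set M := 1 + ∑ e ∈ E, x e with hM
    set w' : Sym2 V → ℝ := fun e => M - x e with hw'
    have hw'0 : ∀ e ∈ E, 0 ≤ w' e := by
      intro e he
      have h1' : x e ≤ ∑ e ∈ E, x e := Finset.single_le_sum (fun f _ => hx.1 f) he
      simp only [hw']
      rw [hM]
      linarith
    have hkey' : ∀ y, memSpanningTreePolytope G y →
        ∑ e ∈ E, w' e * y e = ∑ e ∈ E, w' e * x e := by
      intro y hy
      have expand : ∀ z : Sym2 V → ℝ, ∑ e ∈ E, w' e * z e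
          = M * ∑ e ∈ E, z e - ∑ e ∈ E, x e * z e := by
        intro z
        rw [Finset.mul_sum, ← Finset.sum_sub_distrib]
        apply Finset.sum_congr rfl
        intro e _
        simp only [hw']
        ring
      rw [expand y, expand x, hy.2.2.2, hx.2.2.2, key y hy]
    have stepB := STG.maxeq G x w' hx hw'0 hkey'
    intro c
    by_cases hcC : c ∈ E.image x
    · set A := E.filter (fun e => c ≤ x e) with hA
      set B := E.filter (fun e => x e ≤ c) with hB
      have hxA : ∑ e ∈ A, x e = (graphicRank A : ℝ) := stepA c hcC
      obtain ⟨e₀, he₀, hxe₀⟩ := Finset.mem_image.mp hcC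
      have hw'e₀ : w' e₀ = M - c := by rw [hw']; simp [hxe₀]
      have hMc : M - c ∈ E.image w' := by
        rw [← hw'e₀]
        exact Finset.mem_image_of_mem w' he₀
      have hxB : ∑ e ∈ B, x e = (graphicRank B : ℝ) := by
        have := stepB (M - c) hMc
        have hfilt : E.filter (fun e => M - c ≤ w' e) = B := by
          rw [hB]
          apply Finset.filter_congr
          intro e _
          simp only [hw']
          constructor
          · intro h; simp at h ⊢; linarith
          · intro h; simp at h ⊢; linarith
        rwa [hfilt] at this
      have hABdiag : ∀ e ∈ A, ¬ e.IsDiag := fun e he => hdiag e (Finset.filter_subset _ _ he)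
      have hBdiag : ∀ e ∈ B, ¬ e.IsDiag := fun e he => hdiag e (Finset.filter_subset _ _ he)
      have hunion : A ∪ B = E := by
        apply Finset.Subset.antisymm
        · intro e he
          rcases Finset.mem_union.mp he with h | h
          exacts [Finset.filter_subset _ _ h, Finset.filter_subset _ _ h]
        · intro e he
          rcases le_total c (x e) with h | h
          · exact Finset.mem_union_left _ (Finset.mem_filter.mpr ⟨he, h⟩)
          · exact Finset.mem_union_right _ (Finset.mem_filter.mpr ⟨he, h⟩)
      have hinter : A ∩ B = E.filter (fun e => x e = c) := by
        ext e
        rw [Finset.mem_inter, Finset.mem_filter, Finset.mem_filter, Finset.mem_filter]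
        constructor
        · rintro ⟨⟨he, h1'⟩, _, h2'⟩
          exact ⟨he, le_antisymm h2' h1'⟩
        · rintro ⟨he, h⟩
          exact ⟨⟨he, ge_of_eq h⟩, he, le_of_eq h⟩
      have hsubm := STG.rank_submodular hABdiag hBdiag
      rw [hunion, hinter] at hsubm
      have hsumui := Finset.sum_union_inter (s₁ := A) (s₂ := B) (f := x)
      rw [hunion, hinter] at hsumui
      have hxE : ∑ e ∈ E, x e = (graphicRank E : ℝ) := hx.2.2.2
      have hPle : ∑ e ∈ E.filter (fun e => x e = c), x e
          ≤ (graphicRank (E.filter (fun e => x e = c)) : ℝ) :=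
        hx.2.2.1 _ (Finset.filter_subset _ _)
      have hcast : ((graphicRank E : ℝ) + (graphicRank (E.filter (fun e => x e = c)) : ℝ))
          ≤ (graphicRank A : ℝ) + (graphicRank B : ℝ) := by
        exact_mod_cast hsubm
      linarith
    · have hempty : E.filter (fun e => x e = c) = ∅ := by
        apply Finset.filter_eq_empty_iff.mpr
        intro e he hxc
        exact hcC (Finset.mem_image.mpr ⟨e, he, hxc⟩)
      rw [hempty, Finset.sum_empty, STG.rank_empty]
      norm_num
  · intro h
    have claim : ∀ y, memSpanningTreePolytope G y →
        ∑ e ∈ E, x e * y e = ∑ e ∈ E, x e * x e := by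
      intro y hy
      set C := E.image x with hC
      have fib : ∀ z : Sym2 V → ℝ, ∑ e ∈ E, x e * z e
          = ∑ c ∈ C, c * ∑ e ∈ E.filter (fun e => x e = c), z e := by
        intro z
        rw [← Finset.sum_fiberwise_of_maps_to (g := x) (t := C)
          (fun e he => Finset.mem_image_of_mem x he) (fun e => x e * z e)]
        apply Finset.sum_congr rfl
        intro c _
        rw [Finset.mul_sum]
        apply Finset.sum_congr rfl
        intro e he
        rw [(Finset.mem_filter.mp he).2]
      have tot : ∀ z : Sym2 V → ℝ, ∑ c ∈ C, (∑ e ∈ E.filter (fun e => x e = c), z e)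
          = ∑ e ∈ E, z e :=
        fun z => Finset.sum_fiberwise_of_maps_to (fun e he => Finset.mem_image_of_mem x he) z
      have hyle : ∀ c ∈ C, ∑ e ∈ E.filter (fun e => x e = c), y e
          ≤ ∑ e ∈ E.filter (fun e => x e = c), x e := by
        intro c _
        rw [h c]
        exact hy.2.2.1 _ (Finset.filter_subset _ _)
      have htot : ∑ c ∈ C, (∑ e ∈ E.filter (fun e => x e = c), y e)
          = ∑ c ∈ C, (∑ e ∈ E.filter (fun e => x e = c), x e) := by
        rw [tot y, tot x, hy.2.2.2, hx.2.2.2]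
      have heach : ∀ c ∈ C, ∑ e ∈ E.filter (fun e => x e = c), y e
          = ∑ e ∈ E.filter (fun e => x e = c), x e := by
        have hz : ∑ c ∈ C, ((∑ e ∈ E.filter (fun e => x e = c), x e)
            - ∑ e ∈ E.filter (fun e => x e = c), y e) = 0 := by
          rw [Finset.sum_sub_distrib, htot, sub_self]
        have := (Finset.sum_eq_zero_iff_of_nonneg
          (fun c hc => by linarith [hyle c hc])).mp hz
        intro c hc
        have := this c hc
        linarith
      rw [fib y, fib x]
      apply Finset.sum_congr rfl
      intro c hc
      rw [heach c hc]
    constructor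
    · intro y hy
      exact le_of_eq (claim y hy)
    · intro z hz
      have : ∑ e ∈ E, z e * x e = ∑ e ∈ E, x e * z e :=
        Finset.sum_congr rfl fun e _ => mul_comm _ _
      rw [this, claim z hz]
end

section
/- Let f be a cardinality-based submodular function f(S) = g(|S|), g concave, and let x ∈ P(f) with maximal tight set T(x). If e ∈ E \ T(x) and δ > 0 are such that x + δχ_{\{e\}} ∈ P(f), then (x + δχ_{\{e\}})(e) ≤ min_{e' ∈ T(x)} x(e') whenever T(x) is nonempty; more precisely, for any direction z ≥ 0 supported on E \ T(x), and λ* = max{λ : x + λz ∈ P(f)}, every coordinate of x + λ* z on E \ T(x) is at most min_{e' ∈ T(x)} x(e'). -/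
open Finset

/-- let `f(S) = g(|S|)` be cardinality-based submodular, `x ∈ P(f)` with
nonempty maximal tight set `T`, and `z ≥ 0` a direction supported on `E \ T`. If
`λ* = max{λ : x + λz ∈ P(f)}`, then every coordinate of `x + λ*z` outside `T` is at most
`min_{e' ∈ T} x(e')`. -/
theorem line_increase_bounded_by_min_tight {α : Type*} [Fintype α] [DecidableEq α]
    (g : ℕ → ℝ) (hg0 : g 0 = 0)
    (hgconc : ∀ k : ℕ, g (k + 2) + g k ≤ 2 * g (k + 1))
    (x : α → ℝ) (hx0 : ∀ e, 0 ≤ x e)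
    (hxP : ∀ S : Finset α, ∑ e ∈ S, x e ≤ g S.card)
    (T : Finset α) (hTne : T.Nonempty)
    (hTtight : ∑ e ∈ T, x e = g T.card)
    (hTmax : ∀ S : Finset α, ∑ e ∈ S, x e = g S.card → S ⊆ T)
    (z : α → ℝ) (hz0 : ∀ e, 0 ≤ z e) (hzsupp : ∀ e ∈ T, z e = 0)
    (lamstar : ℝ)
    (hmemnn : ∀ e, 0 ≤ x e + lamstar * z e)
    (hmem : ∀ S : Finset α, ∑ e ∈ S, (x e + lamstar * z e) ≤ g S.card)
    (hmax : ∀ lam : ℝ, (∀ e, 0 ≤ x e + lam * z e) →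
      (∀ S : Finset α, ∑ e ∈ S, (x e + lam * z e) ≤ g S.card) → lam ≤ lamstar) :
    ∀ e ∉ T, ∀ e' ∈ T, x e + lamstar * z e ≤ x e' := by
  intro e he e' he'
  have hnot : e ∉ T.erase e' := fun h => he (mem_of_mem_erase h)
  have hmemS := hmem (insert e (T.erase e'))
  rw [sum_insert hnot, card_insert_of_notMem hnot, card_erase_of_mem he'] at hmemS
  have hcard : T.card - 1 + 1 = T.card := Nat.succ_pred_eq_of_pos (card_pos.mpr hTne)
  rw [hcard] at hmemS
  have hsum : ∑ a ∈ T.erase e', (x a + lamstar * z a) = ∑ a ∈ T.erase e', x a := by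
    apply sum_congr rfl
    intro a ha
    rw [hzsupp a (mem_of_mem_erase ha), mul_zero, add_zero]
  have herase : ∑ a ∈ T.erase e', x a = ∑ a ∈ T, x a - x e' := by
    rw [sum_erase_eq_sub he']
  rw [hsum, herase, hTtight] at hmemS
  linarith
end

section
/- Let f be a monotone normalized submodular function, w ∈ ℝ^E a positive weight vector, and x ∈ B(f). Define c(e) = x(e)/w(e), let c₁ < ... < c_p be the distinct values of c, and S_i = {e : c(e) ≤ c_i}. If x(S_i) = f(S_i) for all i = 1,...,p, then for a diagonal loss matrix L with L_{e,e} = 1/w(e) > 0 (and zero elsewhere), all points z ∈ B(f) satisfy z^T L x ≥ x^T L x, i.e., x minimizes z ↦ z^T L x over B(f). -/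
open Finset

/-- lexicographic optimality yields symmetric Nash equilibria: let
`w > 0`, `x ∈ B(f)`, `c(e) = x(e)/w(e)` with distinct values `c₁ < … < c_p`, and
`Sᵢ = {e : c(e) ≤ cᵢ}`. If `x(Sᵢ) = f(Sᵢ)` for all `i`, then for the diagonal loss
matrix `L` with `L_{e,e} = 1/w(e)`, the point `x` minimizes `z ↦ zᵀLx` over `B(f)`:
`∑ₑ z(e)·x(e)/w(e) ≥ ∑ₑ x(e)·x(e)/w(e)` for all `z ∈ B(f)`. -/
theorem lex_opt_minimizes_linear {α : Type*} [Fintype α] [DecidableEq α]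
    (f : Finset α → ℝ)
    (hsub : ∀ A B : Finset α, f (A ∪ B) + f (A ∩ B) ≤ f A + f B)
    (hmono : ∀ ⦃A B : Finset α⦄, A ⊆ B → f A ≤ f B)
    (hnorm : f ∅ = 0)
    (w : α → ℝ) (hw : ∀ e, 0 < w e)
    (x : α → ℝ) (hx : memBasePoly f x)
    (p : ℕ) (c : Fin p → ℝ) (hc : StrictMono c)
    (hcov : ∀ e : α, ∃ i : Fin p, x e / w e = c i)
    (htight : ∀ i : Fin p,
      ∑ e ∈ univ.filter (fun e => x e / w e ≤ c i), x e
        = f (univ.filter (fun e => x e / w e ≤ c i))) :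
    ∀ z : α → ℝ, memBasePoly f z →
      ∑ e, x e * (x e / w e) ≤ ∑ e, z e * (x e / w e) := by
  intro z hz
  cases p with
  | zero =>
    have hα : IsEmpty α := ⟨fun e => by obtain ⟨i, _⟩ := hcov e; exact i.elim0⟩
    simp
  | succ q =>
    -- extend c to ℕ
    set C : ℕ → ℝ := fun i => c ⟨min i q, by omega⟩ with hC
    have hCeq : ∀ i (hi : i ≤ q), C i = c ⟨i, Nat.lt_succ_of_le hi⟩ := by
      intro i hi; simp [hC, Nat.min_eq_left hi]
    -- key decomposition
    have key : ∀ y : α → ℝ,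
        ∑ e, y e * (x e / w e)
          = C q * ∑ e, y e
            - ∑ i ∈ Finset.range q, (C (i+1) - C i) *
                ∑ e ∈ univ.filter (fun e => x e / w e ≤ C i), y e := by
      intro y
      have pointwise : ∀ e, x e / w e
          = C q - ∑ i ∈ Finset.range q,
              (if x e / w e ≤ C i then C (i+1) - C i else 0) := by
        intro e
        obtain ⟨j, hj⟩ := hcov e
        have hcond : ∀ i ∈ Finset.range q, (x e / w e ≤ C i) ↔ ((j : ℕ) ≤ i) := by
          intro i hi
          rw [Finset.mem_range] at hi
          rw [hj, hCeq i (by omega)]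
          exact hc.le_iff_le.trans (by simp [Fin.le_def])
        have hjq : (j : ℕ) ≤ q := by omega
        have htel : ∑ i ∈ Finset.range q,
            (if x e / w e ≤ C i then C (i+1) - C i else 0) = C q - C (j : ℕ) := by
          rw [Finset.sum_congr rfl (fun i hi => if_congr (hcond i hi) rfl rfl),
            ← Finset.sum_filter]
          have h2 : (Finset.range q).filter (fun i => (j : ℕ) ≤ i)
              = Finset.Ico (j : ℕ) q := by
            ext i; simp [Finset.mem_Ico]; omega
          rw [h2, Finset.sum_Ico_eq_sum_range]
          rw [Finset.sum_congr rfl (fun i _ => by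
            show C ((j:ℕ) + i + 1) - C ((j:ℕ) + i)
              = (fun k => C ((j:ℕ) + k)) (i+1) - (fun k => C ((j:ℕ) + k)) i
            simp [Nat.add_assoc])]
          rw [Finset.sum_range_sub (f := fun k => C ((j:ℕ) + k))]
          rw [Nat.add_sub_cancel' hjq, Nat.add_zero]
        rw [htel, hj, hCeq (j:ℕ) hjq]
        simp
      calc ∑ e, y e * (x e / w e)
          = ∑ e, (y e * C q - ∑ i ∈ Finset.range q,
              (if x e / w e ≤ C i then (C (i+1) - C i) * y e else 0)) := by
            refine Finset.sum_congr rfl fun e _ => ?_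
            conv_lhs => rw [pointwise e]
            rw [mul_sub, Finset.mul_sum]
            congr 1
            refine Finset.sum_congr rfl fun i _ => ?_
            split <;> ring
        _ = C q * ∑ e, y e - ∑ i ∈ Finset.range q, (C (i+1) - C i) *
              ∑ e ∈ univ.filter (fun e => x e / w e ≤ C i), y e := by
            rw [Finset.sum_sub_distrib, Finset.sum_comm]
            congr 1
            · rw [Finset.mul_sum]; exact Finset.sum_congr rfl fun e _ => mul_comm _ _
            · refine Finset.sum_congr rfl fun i _ => ?_
              rw [Finset.sum_filter, Finset.mul_sum]
              refine Finset.sum_congr rfl fun e _ => ?_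
              split <;> ring
    rw [key x, key z]
    have hsum : ∑ e, x e = ∑ e, z e := hx.2.2.trans hz.2.2.symm
    rw [hsum]
    apply sub_le_sub_left
    refine Finset.sum_le_sum fun i hi => ?_
    rw [Finset.mem_range] at hi
    have hd : 0 ≤ C (i+1) - C i := by
      rw [hCeq i (by omega), hCeq (i+1) (by omega)]
      exact sub_nonneg.mpr (hc.monotone (by simp [Fin.le_def]))
    refine mul_le_mul_of_nonneg_left ?_ hd
    have := htight ⟨i, by omega⟩
    rw [hCeq i (by omega)]
    calc ∑ e ∈ univ.filter (fun e => x e / w e ≤ c ⟨i, by omega⟩), z e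
        ≤ f (univ.filter (fun e => x e / w e ≤ c ⟨i, by omega⟩)) := hz.2.1 _
      _ = ∑ e ∈ univ.filter (fun e => x e / w e ≤ c ⟨i, by omega⟩), x e := (htight _).symm
end
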